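/- arXiv:0801.2457 — 10 statements merged into one kernel-verified Lean document; each statement's English description precedes it below -/
import Mathlib

section
/- Let N > 0, d > 0 and A > 0. If a real number z with z² ≠ 1 satisfies the dispersion relation F(z) + A = 0, then z belongs to I₁ ∪ I₂, i.e. either −√(1+d²) < z < −1 or 1 < z < √(1+d²). -/
/-- `F N d z = (1 - N z)² (1 - d²/(z² - 1))`. -/
noncomputable def F (N d z : ℝ) : ℝ := (1 - N * z) ^ 2 * (1 - d ^ 2 / (z ^ 2 - 1))

/-- The interval `I₁ = (-√(1+d²), -1)`. -/
noncomputable def I₁ (d : ℝ) : Set ℝ := Set.Ioo (-Real.sqrt (1 + d ^ 2)) (-1)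

/-- The interval `I₂ = (1, √(1+d²))`. -/
noncomputable def I₂ (d : ℝ) : Set ℝ := Set.Ioo 1 (Real.sqrt (1 + d ^ 2))

/-- Every real root of the dispersion relation `F(z) + A = 0` lies in `I₁ ∪ I₂`. -/
theorem stmt_0 (N d A : ℝ) (hN : 0 < N) (hd : 0 < d) (hA : 0 < A)
    (z : ℝ) (hz : z ^ 2 ≠ 1) (hroot : F N d z + A = 0) :
    z ∈ I₁ d ∪ I₂ d := by
  have hF : F N d z < 0 := by linarith
  unfold F at hF
  -- the second factor must be negative
  have hsq : (0:ℝ) ≤ (1 - N * z) ^ 2 := sq_nonneg _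
  have hfac : 1 - d ^ 2 / (z ^ 2 - 1) < 0 := by
    by_contra h
    push_neg at h
    nlinarith [mul_nonneg hsq h]
  have hdiv : 1 < d ^ 2 / (z ^ 2 - 1) := by linarith
  have hpos : 0 < z ^ 2 - 1 := by
    rcases lt_trichotomy (z ^ 2 - 1) 0 with h | h | h
    · exfalso
      have : d ^ 2 / (z ^ 2 - 1) < 0 :=
        div_neg_of_pos_of_neg (by positivity) h
      linarith
    · exfalso; apply hz; linarith
    · exact h
  have hlt : z ^ 2 - 1 < d ^ 2 := by
    have := (lt_div_iff₀ hpos).mp hdiv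
    linarith
  have hz2 : z ^ 2 < 1 + d ^ 2 := by linarith
  have habs : |z| < Real.sqrt (1 + d ^ 2) := by
    have := Real.sqrt_lt_sqrt (sq_nonneg z) hz2
    rwa [Real.sqrt_sq_eq_abs] at this
  have habs1 : 1 < |z| := by
    nlinarith [abs_nonneg z, sq_abs z]
  rcases le_or_gt 0 z with h0 | h0
  · right
    rw [abs_of_nonneg h0] at habs habs1
    exact ⟨habs1, habs⟩
  · left
    rw [abs_of_neg h0] at habs habs1
    exact ⟨by linarith, by linarith⟩
end

section
/- Let N > 0 with N ≠ 1, d > 0 and A > 0. Then the dispersion relation F(z) + A = 0 has at least one solution in the interval I₁ and at least one solution in the interval I₂. -/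
open Filter Set Topology

lemma F_helper (M d A : ℝ) (hM : M ≠ 1) (hd : 0 < d) (hA : 0 < A) :
    ∃ z ∈ I₂ d, F M d z + A = 0 := by
  set s := Real.sqrt (1 + d ^ 2) with hs
  have hs2 : s ^ 2 = 1 + d ^ 2 := Real.sq_sqrt (by positivity)
  have hs1 : 1 < s := by
    nlinarith [Real.sqrt_nonneg (1 + d ^ 2), sq_nonneg d]
  -- F tends to atBot as z → 1⁺
  have h1 : Tendsto (fun z : ℝ => z ^ 2 - 1) (𝓝[>] 1) (𝓝[>] 0) := by
    apply tendsto_nhdsWithin_of_tendsto_nhds_of_eventually_within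
    · have : Tendsto (fun z : ℝ => z ^ 2 - 1) (𝓝 1) (𝓝 (1 ^ 2 - 1)) := by
        exact (continuous_pow 2).sub continuous_const |>.tendsto 1
      simpa using this.mono_left nhdsWithin_le_nhds
    · filter_upwards [self_mem_nhdsWithin] with z hz
      have : (1:ℝ) < z := hz
      simp only [Set.mem_Ioi]
      nlinarith
  have h2 : Tendsto (fun z : ℝ => d ^ 2 / (z ^ 2 - 1)) (𝓝[>] 1) atTop := by
    have := (tendsto_inv_nhdsGT_zero).comp h1
    have h3 := this.const_mul_atTop (show (0:ℝ) < d ^ 2 by positivity)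
    simpa [div_eq_mul_inv, Function.comp] using h3
  have h4 : Tendsto (fun z : ℝ => 1 - d ^ 2 / (z ^ 2 - 1)) (𝓝[>] 1) atBot := by
    have := tendsto_atBot_add_const_left (𝓝[>] (1:ℝ)) 1 ((tendsto_neg_atTop_atBot (G := ℝ)).comp h2)
    simpa [Function.comp, sub_eq_add_neg] using this
  have h5 : Tendsto (fun z : ℝ => (1 - M * z) ^ 2) (𝓝[>] 1) (𝓝 ((1 - M) ^ 2)) := by
    have : Tendsto (fun z : ℝ => (1 - M * z) ^ 2) (𝓝 1) (𝓝 ((1 - M * 1) ^ 2)) := by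
      exact (((continuous_const.sub (continuous_const.mul continuous_id)).pow 2).tendsto 1)
    simpa using this.mono_left nhdsWithin_le_nhds
  have hMpos : (0:ℝ) < (1 - M) ^ 2 := by
    have : 1 - M ≠ 0 := sub_ne_zero.mpr (Ne.symm hM)
    positivity
  have hFbot : Tendsto (fun z => F M d z) (𝓝[>] 1) atBot := h5.pos_mul_atBot hMpos h4
  -- find z₀ ∈ (1, s) with F z₀ + A < 0
  have hev : ∀ᶠ z in 𝓝[>] (1:ℝ), F M d z + A < 0 := by
    have := hFbot.eventually (eventually_lt_atBot (-A))
    filter_upwards [this] with z hz; linarith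
  have hmem : Set.Ioo (1:ℝ) s ∈ 𝓝[>] (1:ℝ) := Ioo_mem_nhdsGT_of_mem ⟨le_refl 1, hs1⟩
  obtain ⟨z₀, hz₀F, hz₀mem⟩ := (hev.and (eventually_of_mem hmem fun x hx => hx)).exists
  -- continuity on Icc z₀ s
  have hcont : ContinuousOn (fun z => F M d z + A) (Set.Icc z₀ s) := by
    apply ContinuousOn.add _ continuousOn_const
    unfold F
    apply ContinuousOn.mul
    · fun_prop
    · apply ContinuousOn.sub continuousOn_const
      apply ContinuousOn.div continuousOn_const (by fun_prop)
      intro z hz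
      have h1z : 1 < z := lt_of_lt_of_le hz₀mem.1 hz.1
      nlinarith
  -- F s = 0
  have hFs : F M d s + A = A := by
    unfold F
    have : s ^ 2 - 1 = d ^ 2 := by rw [hs2]; ring
    rw [this, div_self (by positivity)]
    ring
  have hiv := intermediate_value_Ioo (le_of_lt hz₀mem.2) hcont
  have h0 : (0:ℝ) ∈ Set.Ioo (F M d z₀ + A) (F M d s + A) := ⟨hz₀F, by rw [hFs]; exact hA⟩
  obtain ⟨z, hzmem, hzval⟩ := hiv h0
  exact ⟨z, ⟨lt_trans hz₀mem.1 hzmem.1, hzmem.2⟩, hzval⟩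

/-- The dispersion relation `F(z) + A = 0` has at least one solution in `I₁`
and at least one in `I₂`. -/
theorem stmt_1 (N d A : ℝ) (hN : 0 < N) (hN1 : N ≠ 1) (hd : 0 < d) (hA : 0 < A) :
    (∃ z ∈ I₁ d, F N d z + A = 0) ∧ (∃ z ∈ I₂ d, F N d z + A = 0) := by
  constructor
  · obtain ⟨z, hz, hzv⟩ := F_helper (-N) d A (by linarith) hd hA
    refine ⟨-z, ⟨by simpa using neg_lt_neg hz.2, by simpa using neg_lt_neg hz.1⟩, ?_⟩
    have : F N d (-z) = F (-N) d z := by unfold F; ring_nf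
    rw [this]; exact hzv
  · exact F_helper N d A hN1 hd hA
end

section
/- Let N > 0, d > 0 and A > 0. Then F is strictly decreasing on the interval I₁ (indeed F'(z) < 0 for all −√(1+d²) < z < −1), and consequently the dispersion relation F(z) + A = 0 has exactly one solution in I₁. -/
lemma hasDerivF (N d : ℝ) {z : ℝ} (hz : z ^ 2 - 1 ≠ 0) :
    HasDerivAt (F N d)
      ((2 * (1 - N * z) * (-N)) * (1 - d ^ 2 / (z ^ 2 - 1)) +
        (1 - N * z) ^ 2 * (-(0 * (z ^ 2 - 1) - d ^ 2 * (2 * z)) / (z ^ 2 - 1) ^ 2)) z := by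
  have h1 : HasDerivAt (fun z : ℝ => (1 - N * z) ^ 2) (2 * (1 - N * z) * (-N)) z := by
    have : HasDerivAt (fun z : ℝ => 1 - N * z) (-N) z := by
      simpa using ((hasDerivAt_id z).const_mul N).const_sub 1
    simpa using this.fun_pow 2
  have h2 : HasDerivAt (fun z : ℝ => 1 - d ^ 2 / (z ^ 2 - 1))
      (-(0 * (z ^ 2 - 1) - d ^ 2 * (2 * z)) / (z ^ 2 - 1) ^ 2) z := by
    have hden : HasDerivAt (fun z : ℝ => z ^ 2 - 1) (2 * z) z := by
      simpa using ((hasDerivAt_pow 2 z).sub_const 1)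
    have := ((hasDerivAt_const z (d ^ 2)).div hden hz).const_sub 1
    simpa [neg_div] using this
  simpa [show F N d = fun z => (1 - N * z) ^ 2 * (1 - d ^ 2 / (z ^ 2 - 1)) from rfl] using h1.fun_mul h2

lemma derivNeg (N d : ℝ) (hN : 0 < N) (hd : 0 < d) {z : ℝ}
    (h1 : -Real.sqrt (1 + d ^ 2) < z) (h2 : z < -1) : deriv (F N d) z < 0 := by
  have hw : 0 < z ^ 2 - 1 := by nlinarith
  have hlt : z ^ 2 - 1 < d ^ 2 := by
    have hz0 : (0:ℝ) ≤ -z := by linarith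
    have : -z < Real.sqrt (1 + d ^ 2) := by linarith
    have := (Real.lt_sqrt hz0).mp this
    nlinarith
  have hE := (hasDerivF N d (ne_of_gt hw)).deriv
  rw [hE]
  set E := (2 * (1 - N * z) * (-N)) * (1 - d ^ 2 / (z ^ 2 - 1)) +
        (1 - N * z) ^ 2 * (-(0 * (z ^ 2 - 1) - d ^ 2 * (2 * z)) / (z ^ 2 - 1) ^ 2) with hEdef
  have hu : 0 < 1 - N * z := by nlinarith
  have key : E * (z ^ 2 - 1) ^ 2 =
      2 * (1 - N * z) * (-N * (z ^ 2 - 1) ^ 2 + d ^ 2 * (z - N)) := by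
    rw [hEdef]; field_simp; ring
  have hb : -N * (z ^ 2 - 1) ^ 2 + d ^ 2 * (z - N) < 0 := by
    nlinarith [mul_pos (mul_pos hd hd) (show 0 < N - z by linarith), mul_pos hN (mul_pos hw hw)]
  have hEw : E * (z ^ 2 - 1) ^ 2 < 0 := by
    rw [key]; exact mul_neg_of_pos_of_neg (by linarith) hb
  have hw2 : 0 < (z ^ 2 - 1) ^ 2 := by positivity
  by_contra h
  push_neg at h
  nlinarith [mul_nonneg h hw2.le]

/-- `F' < 0` on `I₁`, `F` is strictly decreasing there, and the dispersion relation
`F(z) + A = 0` has exactly one solution in `I₁`. -/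
theorem stmt_2 (N d A : ℝ) (hN : 0 < N) (hd : 0 < d) (hA : 0 < A) :
    (∀ z ∈ I₁ d, deriv (F N d) z < 0) ∧
    StrictAntiOn (F N d) (I₁ d) ∧
    (∃! z, z ∈ I₁ d ∧ F N d z + A = 0) := by
  have hsq : (1:ℝ) + d ^ 2 = Real.sqrt (1 + d ^ 2) ^ 2 := by
    rw [Real.sq_sqrt]; positivity
  have hderiv : ∀ z ∈ I₁ d, deriv (F N d) z < 0 := fun z hz =>
    derivNeg N d hN hd hz.1 hz.2
  -- nonvanishing denominator on I₁ and continuity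
  have hne : ∀ z : ℝ, z < -1 → z ^ 2 - 1 ≠ 0 := fun z hz => by nlinarith
  have hcont : ∀ z : ℝ, z < -1 → ContinuousAt (F N d) z := fun z hz =>
    (hasDerivF N d (hne z hz)).continuousAt
  have hanti : StrictAntiOn (F N d) (I₁ d) := by
    apply StrictAntiOn.mono (s := Set.Ioo (-Real.sqrt (1 + d ^ 2)) (-1)) ?_ (le_refl _)
    apply strictAntiOn_of_deriv_neg (convex_Ioo _ _)
    · exact fun z hz => (hcont z hz.2).continuousWithinAt
    · intro z hz
      rw [interior_Ioo] at hz
      exact derivNeg N d hN hd hz.1 hz.2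
  refine ⟨hderiv, hanti, ?_⟩
  -- existence via IVT
  set a := -Real.sqrt (1 + d ^ 2) with ha
  set c := -Real.sqrt (1 + d ^ 2 / (2 * (1 + A))) with hc
  have hcsq : c ^ 2 = 1 + d ^ 2 / (2 * (1 + A)) := by
    rw [hc, neg_pow, Real.sq_sqrt (by positivity)]; ring
  have hc1 : c < -1 := by
    rw [hc, neg_lt_neg_iff]
    rw [show (1:ℝ) < Real.sqrt (1 + d ^ 2 / (2 * (1 + A))) ↔ _ from
      Real.lt_sqrt (by norm_num)]
    have : 0 < d ^ 2 / (2 * (1 + A)) := by positivity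
    nlinarith
  have hac : a < c := by
    rw [ha, hc, neg_lt_neg_iff]
    apply Real.sqrt_lt_sqrt (by positivity)
    have h1 : d ^ 2 / (2 * (1 + A)) < d ^ 2 := by
      rw [div_lt_iff₀ (by positivity)]; nlinarith
    linarith
  have hFa : F N d a = 0 := by
    have : a ^ 2 - 1 = d ^ 2 := by rw [ha]; nlinarith [hsq]
    rw [F, this, div_self (by positivity)]; ring
  have hFc : F N d c < -A := by
    have hw : c ^ 2 - 1 = d ^ 2 / (2 * (1 + A)) := by rw [hcsq]; ring
    have hu : 1 < 1 - N * c := by nlinarith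
    have hv : 1 - d ^ 2 / (c ^ 2 - 1) = -1 - 2 * A := by
      rw [hw, div_div_cancel₀ (by positivity)]; ring
    rw [F, hv]
    have hs : 1 ≤ (1 - N * c) ^ 2 := by nlinarith
    nlinarith [mul_nonneg (by linarith : (0:ℝ) ≤ 2 * A)
      (by linarith : (0:ℝ) ≤ (1 - N * c) ^ 2 - 1)]
  have hcontIcc : ContinuousOn (F N d) (Set.Icc a c) := fun x hx =>
    (hcont x (lt_of_le_of_lt hx.2 hc1)).continuousWithinAt
  have hmem : -A ∈ Set.Icc (F N d c) (F N d a) := ⟨hFc.le, by rw [hFa]; linarith⟩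
  obtain ⟨z, hzIcc, hFz⟩ := intermediate_value_Icc' hac.le hcontIcc hmem
  have hza : z ≠ a := by
    intro h; rw [h, hFa] at hFz; linarith
  have hzI : z ∈ I₁ d := ⟨lt_of_le_of_ne hzIcc.1 (Ne.symm hza), lt_of_le_of_lt hzIcc.2 hc1⟩
  refine ⟨z, ⟨hzI, by linarith⟩, ?_⟩
  rintro y ⟨hyI, hFy⟩
  exact hanti.injOn hyI hzI (by linarith)
end

section
/- Let 0 < N < 1 and d > 0 with d² ≤ N⁻² − 1. Then F'(z) > 0 for every z in the open interval I₂ = (1, √(1+d²)), i.e. F is strictly increasing on I₂; equivalently, φ(z) < 0 and 1 − N·z > 0 throughout the interior of I₂. -/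
/-- `φ N d z = 1/d² + (1 - z/N)/(z² - 1)²`. -/
noncomputable def phi (N d z : ℝ) : ℝ := 1 / d ^ 2 + (1 - z / N) / (z ^ 2 - 1) ^ 2

lemma aux_stmt7 (N d : ℝ) (hN : 0 < N) (hd : 0 < d)
    (hcase : d ^ 2 ≤ 1 / N ^ 2 - 1) :
    ∀ z ∈ I₂ d, HasDerivAt (F N d) (-(2 * N * d ^ 2 * (1 - N * z) * phi N d z)) z ∧
      phi N d z < 0 ∧ 0 < 1 - N * z := by
  intro z hz
  obtain ⟨hz1, hz2⟩ := hz
  have hz0 : 0 < z := lt_trans one_pos hz1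
  have hsq : z ^ 2 < 1 + d ^ 2 := by
    have h1 : Real.sqrt (1 + d ^ 2) ^ 2 = 1 + d ^ 2 := Real.sq_sqrt (by positivity)
    nlinarith [Real.sqrt_nonneg (1 + d ^ 2)]
  have hu : 0 < z ^ 2 - 1 := by nlinarith
  have hud : z ^ 2 - 1 < d ^ 2 := by linarith
  have hu0 : z ^ 2 - 1 ≠ 0 := ne_of_gt hu
  -- N*z < 1
  have hNz : N * z < 1 := by
    have hNsq : (N * z) ^ 2 < 1 ^ 2 := by
      have h2 : z ^ 2 < 1 / N ^ 2 := by linarith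
      have h3 : N ^ 2 * (1 / N ^ 2) = 1 := by field_simp
      nlinarith [pow_pos hN 2]
    exact lt_of_pow_lt_pow_left₀ 2 (by norm_num) hNsq
  have h1Nz : 0 < 1 - N * z := by linarith
  -- phi < 0
  have hphi : phi N d z < 0 := by
    have hform : phi N d z =
        (N * (z ^ 2 - 1) ^ 2 + d ^ 2 * (N - z)) / (N * d ^ 2 * (z ^ 2 - 1) ^ 2) := by
      unfold phi
      field_simp
    rw [hform]
    apply div_neg_of_neg_of_pos
    · nlinarith [mul_pos (mul_pos hN hu) (sub_pos.2 hud),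
        mul_pos (mul_pos (pow_pos hd 2) hz0) h1Nz]
    · positivity
  refine ⟨?_, hphi, h1Nz⟩
  -- derivative
  have h1 : HasDerivAt (fun z : ℝ => 1 - N * z) (-N) z := by
    simpa using ((hasDerivAt_id z).const_mul N).const_sub 1
  have h2 : HasDerivAt (fun z : ℝ => (1 - N * z) ^ 2) (2 * (1 - N * z) ^ 1 * (-N)) z :=
    h1.pow 2
  have h3 : HasDerivAt (fun z : ℝ => z ^ 2 - 1) (2 * z ^ 1) z := by
    simpa using (hasDerivAt_pow 2 z).sub_const 1
  have h4 : HasDerivAt (fun z : ℝ => d ^ 2 / (z ^ 2 - 1))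
      ((0 * (z ^ 2 - 1) - d ^ 2 * (2 * z ^ 1)) / (z ^ 2 - 1) ^ 2) z :=
    (hasDerivAt_const z (d ^ 2)).div h3 hu0
  have h5 : HasDerivAt (fun z : ℝ => 1 - d ^ 2 / (z ^ 2 - 1))
      (-((0 * (z ^ 2 - 1) - d ^ 2 * (2 * z ^ 1)) / (z ^ 2 - 1) ^ 2)) z :=
    h4.const_sub 1
  have h6 := h2.mul h5
  have heq : (2 * (1 - N * z) ^ 1 * (-N)) * (1 - d ^ 2 / (z ^ 2 - 1)) +
      (1 - N * z) ^ 2 * (-((0 * (z ^ 2 - 1) - d ^ 2 * (2 * z ^ 1)) / (z ^ 2 - 1) ^ 2)) =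
      -(2 * N * d ^ 2 * (1 - N * z) * phi N d z) := by
    unfold phi
    field_simp
    ring
  rw [heq] at h6
  exact h6

/-- If `0 < N < 1` and `d² ≤ N⁻² - 1` then `F' > 0` on `I₂` (`F` strictly increasing
there); equivalently `φ < 0` and `1 - N z > 0` throughout `I₂`. -/
theorem stmt_7 (N d : ℝ) (hN : 0 < N) (hN1 : N < 1) (hd : 0 < d)
    (hcase : d ^ 2 ≤ 1 / N ^ 2 - 1) :
    (∀ z ∈ I₂ d, 0 < deriv (F N d) z) ∧
    StrictMonoOn (F N d) (I₂ d) ∧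
    (∀ z ∈ I₂ d, phi N d z < 0 ∧ 0 < 1 - N * z) := by
  have key := aux_stmt7 N d hN hd hcase
  have hpos : ∀ z ∈ I₂ d, 0 < deriv (F N d) z := by
    intro z hz
    obtain ⟨hder, hphi, h1Nz⟩ := key z hz
    rw [hder.deriv]
    have : 0 < (2 * N * d ^ 2 * (1 - N * z)) * (-phi N d z) :=
      mul_pos (mul_pos (by positivity) h1Nz) (neg_pos.2 hphi)
    nlinarith
  refine ⟨hpos, ?_, fun z hz => ⟨(key z hz).2.1, (key z hz).2.2⟩⟩
  have hconv : Convex ℝ (I₂ d) := convex_Ioo _ _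
  apply strictMonoOn_of_deriv_pos hconv
  · intro x hx
    exact ((key x hx).1).differentiableAt.continuousAt.continuousWithinAt
  · intro x hx
    rw [show interior (I₂ d) = I₂ d from interior_Ioo] at hx
    exact hpos x hx
end

section
/- (Proposition 1) Let 0 < N < 1 and d > 0 with d² ≤ N⁻² − 1. Then for every A > 0, the dispersion relation F(z) + A = 0 has exactly two real solutions z with z² ≠ 1: exactly one in the interval I₁ and exactly one in the interval I₂. -/
private lemma F_rewrite (N d z : ℝ) (hz : z ^ 2 - 1 ≠ 0) :
    F N d z = -((1 - N * z) ^ 2 * (d ^ 2 - (z ^ 2 - 1)) / (z ^ 2 - 1)) := by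
  unfold F
  field_simp
  ring

/-- strict monotonicity of F on I₂ -/
private lemma mono2 (N d : ℝ) (hN : 0 < N) (hd : 0 < d) {s z₁ z₂ : ℝ}
    (hs2 : s ^ 2 = 1 + d ^ 2) (hsN : s ≤ 1 / N)
    (h1 : 1 < z₁) (h12 : z₁ < z₂) (h2s : z₂ < s) :
    F N d z₁ < F N d z₂ := by
  have hd1 : 0 < z₁ ^ 2 - 1 := by nlinarith
  have hd2 : 0 < z₂ ^ 2 - 1 := by nlinarith
  have h2d : z₂ ^ 2 - 1 < d ^ 2 := by nlinarith
  have hu2 : 0 < 1 - N * z₂ := by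
    have h2N : z₂ < 1 / N := lt_of_lt_of_le h2s hsN
    have : N * z₂ < N * (1 / N) := by exact mul_lt_mul_of_pos_left h2N hN
    rw [mul_one_div_cancel hN.ne'] at this
    linarith
  have hu12 : 1 - N * z₂ < 1 - N * z₁ := by nlinarith
  rw [F_rewrite _ _ _ hd1.ne', F_rewrite _ _ _ hd2.ne']
  have key : (1 - N * z₂) ^ 2 * (d ^ 2 - (z₂ ^ 2 - 1)) / (z₂ ^ 2 - 1)
      < (1 - N * z₁) ^ 2 * (d ^ 2 - (z₁ ^ 2 - 1)) / (z₁ ^ 2 - 1) := by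
    rw [div_lt_div_iff₀ hd2 hd1]
    have ha : (1 - N * z₂) ^ 2 < (1 - N * z₁) ^ 2 := by nlinarith
    have hb : (d ^ 2 - (z₂ ^ 2 - 1)) * (z₁ ^ 2 - 1) < (d ^ 2 - (z₁ ^ 2 - 1)) * (z₂ ^ 2 - 1) := by
      nlinarith [mul_pos (pow_pos hd 2) (show (0:ℝ) < z₂ ^ 2 - z₁ ^ 2 by nlinarith)]
    nlinarith [mul_pos (sub_pos.mpr h2d) hd1, sq_nonneg (1 - N * z₂)]
  linarith

/-- strict antitonicity of F on I₁ -/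
private lemma mono1 (N d : ℝ) (hN : 0 < N) (hd : 0 < d) {s z₁ z₂ : ℝ}
    (hs2 : s ^ 2 = 1 + d ^ 2) (h1 : -s < z₁) (h12 : z₁ < z₂) (h2 : z₂ < -1) :
    F N d z₂ < F N d z₁ := by
  have hd2 : 0 < z₂ ^ 2 - 1 := by nlinarith
  have hd1' : z₁ ^ 2 - 1 < d ^ 2 := by nlinarith
  have hd1 : 0 < z₁ ^ 2 - 1 := by nlinarith
  rw [F_rewrite _ _ _ hd1.ne', F_rewrite _ _ _ hd2.ne']
  have key : (1 - N * z₁) ^ 2 * (d ^ 2 - (z₁ ^ 2 - 1)) / (z₁ ^ 2 - 1)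
      < (1 - N * z₂) ^ 2 * (d ^ 2 - (z₂ ^ 2 - 1)) / (z₂ ^ 2 - 1) := by
    rw [div_lt_div_iff₀ hd1 hd2]
    have h₁ : 0 < (z₂ - z₁) * (-(z₁ + z₂)) * d ^ 2 := by
      apply mul_pos (mul_pos (by linarith) (by linarith)) (pow_pos hd 2)
    have h₂ : 0 < (z₂ - z₁) * (z₁ * z₂ * d ^ 2 + (z₁ ^ 2 - 1) * (z₂ ^ 2 - 1) + d ^ 2) * N := by
      apply mul_pos (mul_pos (by linarith) ?_) hN
      have hzz : 1 < z₁ * z₂ := by nlinarith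
      nlinarith [mul_pos hd1 hd2]
    have h₃ : 0 < (z₂ - z₁) * (-(z₁ + z₂)) * ((z₁ ^ 2 - 1) * (z₂ ^ 2 - 1) + d ^ 2) * N ^ 2 := by
      apply mul_pos (mul_pos (mul_pos (by linarith) (by linarith)) ?_) (pow_pos hN 2)
      nlinarith [mul_pos hd1 hd2]
    nlinarith [h₁, h₂, h₃]
  linarith

/-- existence of a negative value point in I₂ -/
private lemma exists2 (N d A : ℝ) (hN : 0 < N) (hN1 : N < 1) (hd : 0 < d) (hA : 0 < A) :
    ∃ z₀ : ℝ, 1 < z₀ ∧ z₀ ^ 2 < 1 + d ^ 2 ∧ F N d z₀ + A < 0 := by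
  set c₀ : ℝ := (1 - N) ^ 2 / 4 with hc₀def
  have hc₀ : 0 < c₀ := div_pos (pow_pos (by linarith : (0:ℝ) < 1 - N) 2) (by norm_num)
  set Y : ℝ := (A + 1) / c₀ with hYdef
  have hY : 0 < Y := div_pos (by linarith) hc₀
  have hYc : c₀ * Y = A + 1 := by
    rw [hYdef]; field_simp
  set m : ℝ := d ^ 2 / (1 + Y) with hm
  have hm0 : 0 < m := div_pos (pow_pos hd 2) (by linarith)
  set k : ℝ := ((1 + N) / (2 * N)) ^ 2 - 1 with hk
  have hq1 : 1 < (1 + N) / (2 * N) := by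
    rw [lt_div_iff₀ (by positivity)]; linarith
  have hk0 : 0 < k := by rw [hk]; nlinarith
  set e : ℝ := min (d ^ 2 / 2) (min m k) with he
  have he0 : 0 < e := lt_min (div_pos (pow_pos hd 2) (by norm_num)) (lt_min hm0 hk0)
  have he1 : e ≤ d ^ 2 / 2 := min_le_left _ _
  have hem : e ≤ m := le_trans (min_le_right _ _) (min_le_left _ _)
  have hek : e ≤ k := le_trans (min_le_right _ _) (min_le_right _ _)
  refine ⟨Real.sqrt (1 + e), ?_, ?_, ?_⟩
  · nlinarith [Real.sq_sqrt (show (0:ℝ) ≤ 1 + e by linarith), Real.sqrt_nonneg (1 + e)]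
  · rw [Real.sq_sqrt (by linarith)]; linarith
  · have hz2 : (Real.sqrt (1 + e)) ^ 2 = 1 + e := Real.sq_sqrt (by linarith)
    have hz0 : 0 ≤ Real.sqrt (1 + e) := Real.sqrt_nonneg _
    set z₀ := Real.sqrt (1 + e) with hz₀
    have hzk : z₀ ≤ (1 + N) / (2 * N) := by
      have h1 : z₀ ^ 2 ≤ ((1 + N) / (2 * N)) ^ 2 := by rw [hz2, hk] at *; linarith
      nlinarith
    have hub : (1 - N) / 2 ≤ 1 - N * z₀ := by
      have : N * z₀ ≤ N * ((1 + N) / (2 * N)) := mul_le_mul_of_nonneg_left hzk hN.le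
      have h2 : N * ((1 + N) / (2 * N)) = (1 + N) / 2 := by field_simp
      rw [h2] at this
      linarith
    have hu : c₀ ≤ (1 - N * z₀) ^ 2 := by
      have := pow_le_pow_left₀ (by linarith) hub 2
      calc c₀ = ((1 - N) / 2) ^ 2 := by rw [hc₀def]; ring
      _ ≤ (1 - N * z₀) ^ 2 := this
    have hXe : 1 + Y ≤ d ^ 2 / e := by
      have h1 : d ^ 2 / m ≤ d ^ 2 / e := by
        apply div_le_div_of_nonneg_left (pow_pos hd 2).le he0 hem
      have h2 : d ^ 2 / m = 1 + Y := by
        rw [hm]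
        rw [div_div_eq_mul_div, mul_comm, mul_div_assoc, div_self (pow_pos hd 2).ne', mul_one]
      linarith
    have hz1 : z₀ ^ 2 - 1 = e := by rw [hz2]; ring
    unfold F
    rw [hz1]
    set X := d ^ 2 / e with hX
    have h5 : 0 ≤ ((1 - N * z₀) ^ 2 - c₀) * (X - 1) := by
      apply mul_nonneg (by linarith) (by linarith)
    have h6 : c₀ * Y ≤ c₀ * (X - 1) := mul_le_mul_of_nonneg_left (by linarith) hc₀.le
    nlinarith [h5, h6, hYc]

/-- existence of a negative value point in I₁ -/
private lemma exists1 (N d A : ℝ) (hN : 0 < N) (hN1 : N < 1) (hd : 0 < d) (hA : 0 < A) :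
    ∃ z₀ : ℝ, z₀ < -1 ∧ z₀ ^ 2 < 1 + d ^ 2 ∧ F N d z₀ + A < 0 := by
  set e : ℝ := min (d ^ 2 / 2) (d ^ 2 / (A + 2)) with he
  have he0 : 0 < e := lt_min (div_pos (pow_pos hd 2) (by norm_num)) (div_pos (pow_pos hd 2) (by linarith))
  have he1 : e ≤ d ^ 2 / 2 := min_le_left _ _
  have hem : e ≤ d ^ 2 / (A + 2) := min_le_right _ _
  refine ⟨-Real.sqrt (1 + e), ?_, ?_, ?_⟩
  · have : (1 : ℝ) < Real.sqrt (1 + e) := by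
      nlinarith [Real.sq_sqrt (show (0:ℝ) ≤ 1 + e by linarith), Real.sqrt_nonneg (1 + e)]
    linarith
  · rw [neg_pow]; rw [Real.sq_sqrt (by linarith)]; norm_num; linarith
  · have hz2 : (Real.sqrt (1 + e)) ^ 2 = 1 + e := Real.sq_sqrt (by linarith)
    have hz0 : 0 ≤ Real.sqrt (1 + e) := Real.sqrt_nonneg _
    set z₀ := -Real.sqrt (1 + e) with hz₀
    have hz1 : z₀ ^ 2 - 1 = e := by rw [hz₀, neg_pow]; rw [hz2]; ring
    have hu : 1 ≤ (1 - N * z₀) ^ 2 := by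
      have h1 : 0 ≤ -z₀ := by rw [hz₀]; simpa using hz0
      nlinarith [mul_nonneg hN.le h1, sq_nonneg (N * z₀)]
    have hXe : A + 2 ≤ d ^ 2 / e := by
      have h1 : d ^ 2 / (d ^ 2 / (A + 2)) ≤ d ^ 2 / e :=
        div_le_div_of_nonneg_left (pow_pos hd 2).le he0 hem
      have h2 : d ^ 2 / (d ^ 2 / (A + 2)) = A + 2 := by
        rw [div_div_eq_mul_div, mul_comm, mul_div_assoc, div_self (pow_pos hd 2).ne', mul_one]
      linarith
    unfold F
    rw [hz1]
    set X := d ^ 2 / e with hX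
    have h5 : 0 ≤ ((1 - N * z₀) ^ 2 - 1) * (X - 1) := by
      apply mul_nonneg (by linarith) (by linarith)
    nlinarith [h5, hXe]

/-- localization of roots -/
private lemma loc (N d A z : ℝ) (hd : 0 < d) (hA : 0 < A) (hz : z ^ 2 ≠ 1)
    (hroot : F N d z + A = 0) : 1 < z ^ 2 ∧ z ^ 2 < 1 + d ^ 2 := by
  have hFz : F N d z = -A := by linarith
  have hne : z ^ 2 - 1 ≠ 0 := sub_ne_zero.mpr hz
  have hv : 1 - d ^ 2 / (z ^ 2 - 1) < 0 := by
    by_contra h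
    push_neg at h
    have := mul_nonneg (sq_nonneg (1 - N * z)) h
    unfold F at hFz
    nlinarith
  have hpos : 0 < z ^ 2 - 1 := by
    rcases lt_trichotomy (z ^ 2 - 1) 0 with h | h | h
    · exfalso
      have : d ^ 2 / (z ^ 2 - 1) < 0 := div_neg_of_pos_of_neg (by positivity) h
      linarith
    · exact absurd h hne
    · exact h
  have hlt : d ^ 2 / (z ^ 2 - 1) > 1 := by linarith
  rw [gt_iff_lt, lt_div_iff₀ hpos, one_mul] at hlt
  constructor <;> linarith

set_option maxHeartbeats 1000000 in
/-- Proposition 1: for `0 < N < 1` and `d² ≤ N⁻² - 1`, the dispersion relation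
`F(z) + A = 0` has exactly two real solutions with `z² ≠ 1`:
exactly one in `I₁` and exactly one in `I₂`. -/
theorem stmt_8 (N d A : ℝ) (hN : 0 < N) (hN1 : N < 1) (hd : 0 < d)
    (hcase : d ^ 2 ≤ 1 / N ^ 2 - 1) (hA : 0 < A) :
    {z : ℝ | z ^ 2 ≠ 1 ∧ F N d z + A = 0}.ncard = 2 ∧
    (∃! z, z ∈ I₁ d ∧ F N d z + A = 0) ∧
    (∃! z, z ∈ I₂ d ∧ F N d z + A = 0) ∧
    (∀ z : ℝ, z ^ 2 ≠ 1 → F N d z + A = 0 → z ∈ I₁ d ∪ I₂ d) := by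
  set s := Real.sqrt (1 + d ^ 2) with hs
  have hs2 : s ^ 2 = 1 + d ^ 2 := Real.sq_sqrt (by positivity)
  have hs0 : 0 ≤ s := Real.sqrt_nonneg _
  have hs1 : 1 < s := by nlinarith
  have hsN : s ≤ 1 / N := by
    have hN0 : 0 < 1 / N := by positivity
    by_contra h
    push_neg at h
    have h1 : (1 / N) ^ 2 < s ^ 2 := by nlinarith
    have h2 : (1 / N) ^ 2 = 1 / N ^ 2 := by field_simp
    linarith [hcase, h1, hs2]
  -- localization in terms of intervals
  have hloc : ∀ z : ℝ, z ^ 2 ≠ 1 → F N d z + A = 0 → z ∈ I₁ d ∪ I₂ d := by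
    intro z hz hroot
    obtain ⟨h1, h2⟩ := loc N d A z hd hA hz hroot
    rcases le_or_gt 0 z with hzpos | hzneg
    · right
      constructor
      · nlinarith
      · rw [← hs]
        nlinarith
    · left
      constructor
      · rw [← hs]
        nlinarith
      · nlinarith
  -- continuity of F + A away from ±1
  have hcont : ∀ a b : ℝ, (∀ z ∈ Set.Icc a b, z ^ 2 - 1 ≠ 0) →
      ContinuousOn (fun z => F N d z + A) (Set.Icc a b) := by
    intro a b hne
    unfold F
    apply ContinuousOn.add _ continuousOn_const
    apply ContinuousOn.mul (by fun_prop)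
    apply ContinuousOn.sub continuousOn_const
    exact ContinuousOn.div continuousOn_const (by fun_prop) hne
  -- value at endpoints s and -s
  have hFs : F N d s + A = A := by
    unfold F
    rw [show s ^ 2 - 1 = d ^ 2 by rw [hs2]; ring, div_self (pow_pos hd 2).ne']
    ring
  have hFns : F N d (-s) + A = A := by
    unfold F
    rw [show (-s) ^ 2 - 1 = d ^ 2 by rw [neg_pow]; rw [hs2]; ring, div_self (pow_pos hd 2).ne']
    ring
  -- root in I₂
  obtain ⟨z₀, hz₀1, hz₀s, hz₀F⟩ := exists2 N d A hN hN1 hd hA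
  have hz₀lt : z₀ < s := by nlinarith
  have hivt2 : ∃ x ∈ Set.Ioo z₀ s, F N d x + A = 0 := by
    have hc : ContinuousOn (fun z => F N d z + A) (Set.Icc z₀ s) := by
      apply hcont
      intro z hz
      have := hz.1
      nlinarith
    have h0 : (0 : ℝ) ∈ Set.Ioo (F N d z₀ + A) (F N d s + A) := by
      rw [hFs]; exact ⟨hz₀F, hA⟩
    have := intermediate_value_Ioo hz₀lt.le hc h0
    obtain ⟨x, hx, hfx⟩ := this
    exact ⟨x, hx, hfx⟩
  obtain ⟨x₂, hx₂mem, hx₂F⟩ := hivt2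
  have hx₂I : x₂ ∈ I₂ d := ⟨lt_trans hz₀1 hx₂mem.1, by rw [← hs]; exact hx₂mem.2⟩
  -- root in I₁
  obtain ⟨w₀, hw₀1, hw₀s, hw₀F⟩ := exists1 N d A hN hN1 hd hA
  have hw₀gt : -s < w₀ := by nlinarith
  have hivt1 : ∃ x ∈ Set.Ioo (-s) w₀, F N d x + A = 0 := by
    have hc : ContinuousOn (fun z => F N d z + A) (Set.Icc (-s) w₀) := by
      apply hcont
      intro z hz
      have := hz.2
      nlinarith
    have h0 : (0 : ℝ) ∈ Set.Ioo (F N d w₀ + A) (F N d (-s) + A) := by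
      rw [hFns]; exact ⟨hw₀F, hA⟩
    have := intermediate_value_Ioo' hw₀gt.le hc h0
    obtain ⟨x, hx, hfx⟩ := this
    exact ⟨x, hx, hfx⟩
  obtain ⟨x₁, hx₁mem, hx₁F⟩ := hivt1
  have hx₁I : x₁ ∈ I₁ d := ⟨by rw [← hs]; exact hx₁mem.1, lt_trans hx₁mem.2 hw₀1⟩
  -- uniqueness in I₂
  have huniq2 : ∀ y ∈ I₂ d, F N d y + A = 0 → y = x₂ := by
    intro y hy hyF
    rw [I₂, ← hs] at hy
    rcases lt_trichotomy y x₂ with h | h | h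
    · exfalso
      have := mono2 N d hN hd hs2 hsN hy.1 h hx₂I.2
      linarith
    · exact h
    · exfalso
      have := mono2 N d hN hd hs2 hsN hx₂I.1 h hy.2
      linarith
  have huniq1 : ∀ y ∈ I₁ d, F N d y + A = 0 → y = x₁ := by
    intro y hy hyF
    rw [I₁, ← hs] at hy
    rcases lt_trichotomy y x₁ with h | h | h
    · exfalso
      have := mono1 N d hN hd hs2 hy.1 h hx₁I.2
      linarith
    · exact h
    · exfalso
      have := mono1 N d hN hd hs2 hx₁I.1 h hy.2
      linarith
  have hx₁lt : x₁ < -1 := hx₁I.2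
  have hx₂gt : 1 < x₂ := hx₂I.1
  have hne12 : x₁ ≠ x₂ := by intro h; rw [h] at hx₁lt; linarith
  refine ⟨?_, ⟨x₁, ⟨hx₁I, hx₁F⟩, fun y hy => huniq1 y hy.1 hy.2⟩,
    ⟨x₂, ⟨hx₂I, hx₂F⟩, fun y hy => huniq2 y hy.1 hy.2⟩, hloc⟩
  have hset : {z : ℝ | z ^ 2 ≠ 1 ∧ F N d z + A = 0} = {x₁, x₂} := by
    ext z
    simp only [Set.mem_setOf_eq, Set.mem_insert_iff, Set.mem_singleton_iff]
    constructor
    · rintro ⟨hz1, hz2⟩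
      rcases hloc z hz1 hz2 with h | h
      · left; exact huniq1 z h hz2
      · right; exact huniq2 z h hz2
    · rintro (rfl | rfl)
      · exact ⟨by intro h; nlinarith, hx₁F⟩
      · exact ⟨by intro h; nlinarith, hx₂F⟩
  rw [hset]
  exact Set.ncard_pair hne12
end

section
/- Let 0 < N < 1 and d > 0 with d² > N⁻² − 1. Then the equation φ(z) = 0 has exactly one root z₀₁ in the interval I₂ = (1, √(1+d²)); moreover z₀₁ lies in the subinterval (1/N, √(1+d²)) and F(z₀₁) < 0. -/
/-- Auxiliary polynomial: `g z = (z²-1)²/d² + (1 - z/N)`. -/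
noncomputable def gaux (N d z : ℝ) : ℝ := (z ^ 2 - 1) ^ 2 / d ^ 2 + (1 - z / N)

lemma gaux_eq (N d z : ℝ) (hN : 0 < N) (hd : 0 < d) :
    N * (z ^ 2 - 1) ^ 2 + (N - z) * d ^ 2 = gaux N d z * (N * d ^ 2) := by
  unfold gaux
  field_simp

lemma phi_iff (N d z : ℝ) (hN : 0 < N) (hd : 0 < d) (hz : 1 < z) :
    phi N d z = 0 ↔ gaux N d z = 0 := by
  have h0 : (0:ℝ) < z ^ 2 - 1 := by nlinarith
  have h1 : (z ^ 2 - 1) ^ 2 > 0 := by positivity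
  have h2 : phi N d z * (z ^ 2 - 1) ^ 2 = gaux N d z := by
    unfold phi gaux
    field_simp
  constructor
  · intro h; rw [← h2, h, zero_mul]
  · intro h
    have := h2
    rw [h] at this
    have := mul_eq_zero.mp this
    rcases this with h' | h'
    · exact h'
    · exact absurd h' (ne_of_gt h1)

lemma key_unique (N d a b : ℝ) (hN : 0 < N) (hN1 : N < 1) (hd : 0 < d)
    (ha : 1 < a) (hab : a < b)
    (ea : gaux N d a = 0) (eb : gaux N d b = 0) : False := by
  have ea' : N * (a ^ 2 - 1) ^ 2 + (N - a) * d ^ 2 = 0 := by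
    rw [gaux_eq N d a hN hd, ea, zero_mul]
  have eb' : N * (b ^ 2 - 1) ^ 2 + (N - b) * d ^ 2 = 0 := by
    rw [gaux_eq N d b hN hd, eb, zero_mul]
  have hfac : (a - b) * (N * (a + b) * (a ^ 2 + b ^ 2 - 2) - d ^ 2) = 0 := by
    linear_combination ea' - eb'
  have hne : a - b ≠ 0 := by linarith
  have hkey : N * (a + b) * (a ^ 2 + b ^ 2 - 2) = d ^ 2 := by
    rcases mul_eq_zero.mp hfac with h | h
    · exact absurd h hne
    · linarith
  -- from ea' : N (a²-1)² = (a - N) d² = (a-N) N (a+b)(a²+b²-2)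
  have h1 : (a ^ 2 - 1) ^ 2 = (a - N) * (a + b) * (a ^ 2 + b ^ 2 - 2) := by
    have hN' : N ≠ 0 := ne_of_gt hN
    have : N * (a ^ 2 - 1) ^ 2 = N * ((a - N) * (a + b) * (a ^ 2 + b ^ 2 - 2)) := by
      nlinarith [ea', hkey]
    exact mul_left_cancel₀ hN' this
  have hb1 : 1 < b := lt_trans ha hab
  have p2 : (0:ℝ) < a ^ 2 - 1 := by nlinarith
  have p1 : a ^ 2 - 1 < (a - N) * (a + b) := by
    nlinarith [mul_pos (show (0:ℝ) < a - 1 by linarith) (show (0:ℝ) < b - N by linarith),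
      mul_pos (show (0:ℝ) < 1 - N by linarith) (show (0:ℝ) < b by linarith)]
  have p3 : a ^ 2 - 1 < a ^ 2 + b ^ 2 - 2 := by nlinarith
  have pX : 0 < (a - N) * (a + b) := lt_trans p2 p1
  have hlt : (a ^ 2 - 1) * (a ^ 2 - 1) < ((a - N) * (a + b)) * (a ^ 2 + b ^ 2 - 2) := by
    calc (a ^ 2 - 1) * (a ^ 2 - 1) < ((a - N) * (a + b)) * (a ^ 2 - 1) := by nlinarith
      _ < ((a - N) * (a + b)) * (a ^ 2 + b ^ 2 - 2) := by nlinarith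
  nlinarith [h1, hlt]

/-- For `0 < N < 1` and `d² > N⁻² - 1`, the equation `φ(z) = 0` has exactly one root
`z₀₁` in `I₂`; moreover `z₀₁ ∈ (1/N, √(1+d²))` and `F(z₀₁) < 0`. -/
theorem stmt_9 (N d : ℝ) (hN : 0 < N) (hN1 : N < 1) (hd : 0 < d)
    (hcase : 1 / N ^ 2 - 1 < d ^ 2) :
    ∃ z₀₁ : ℝ, (z₀₁ ∈ I₂ d ∧ phi N d z₀₁ = 0) ∧
      (∀ z ∈ I₂ d, phi N d z = 0 → z = z₀₁) ∧
      z₀₁ ∈ Set.Ioo (1 / N) (Real.sqrt (1 + d ^ 2)) ∧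
      F N d z₀₁ < 0 := by
  set s := Real.sqrt (1 + d ^ 2) with hs_def
  have h1d : (0:ℝ) ≤ 1 + d ^ 2 := by positivity
  have hs2 : s ^ 2 = 1 + d ^ 2 := Real.sq_sqrt h1d
  have hs0 : 0 < s := Real.sqrt_pos.mpr (by positivity)
  have hNinv : (0:ℝ) < 1 / N := by positivity
  have hNinv1 : 1 < 1 / N := by
    rw [lt_div_iff₀ hN]; linarith
  have hNs : 1 / N < s := by
    nlinarith [hs2, sq_nonneg (s - 1/N), sq_nonneg (s + 1/N), mul_pos hNinv hs0,
      (show (1/N)^2 = 1/N^2 by field_simp)]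
  have hs1 : 1 < s := lt_trans hNinv1 hNs
  -- values of gaux at endpoints
  have hgA : gaux N d (1 / N) < 0 := by
    unfold gaux
    have h1 : ((1/N) ^ 2 - 1) ^ 2 / d ^ 2 < (1/N)^2 - 1 := by
      rw [div_lt_iff₀ (by positivity)]
      have ht : 0 < (1/N)^2 - 1 := by nlinarith
      have ht2 : (1/N)^2 - 1 < d ^ 2 := by
        have : (1/N)^2 = 1/N^2 := by field_simp
        linarith [this ▸ hcase]
      nlinarith
    have : 1 - (1/N)/N = 1 - (1/N)^2 := by field_simp
    rw [this]; linarith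
  have hgB : 0 < gaux N d s := by
    unfold gaux
    have h1 : (s ^ 2 - 1) ^ 2 / d ^ 2 = d ^ 2 := by
      rw [hs2]; field_simp; ring
    rw [h1]
    have : 1 - s / N = 1 - s * (1/N) := by ring
    nlinarith [mul_pos hs0 (show (0:ℝ) < s - 1/N by linarith)]
  -- IVT
  have hcont : ContinuousOn (gaux N d) (Set.Icc (1/N) s) := by
    apply Continuous.continuousOn
    unfold gaux
    fun_prop
  have hsub : Set.Ioo (gaux N d (1/N)) (gaux N d s) ⊆ gaux N d '' Set.Ioo (1/N) s :=
    intermediate_value_Ioo (le_of_lt hNs) hcont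
  obtain ⟨z₀, hz₀mem, hz₀⟩ := hsub ⟨hgA, hgB⟩
  obtain ⟨hz₀l, hz₀r⟩ := hz₀mem
  have hz₀1 : 1 < z₀ := lt_trans hNinv1 hz₀l
  have hz₀I : z₀ ∈ I₂ d := ⟨hz₀1, hz₀r⟩
  refine ⟨z₀, ⟨hz₀I, (phi_iff N d z₀ hN hd hz₀1).mpr hz₀⟩, ?_, ⟨hz₀l, hz₀r⟩, ?_⟩
  · intro z hz hphi
    obtain ⟨hz1, hzr⟩ := hz
    have hgz : gaux N d z = 0 := (phi_iff N d z hN hd hz1).mp hphi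
    rcases lt_trichotomy z z₀ with h | h | h
    · exact absurd (key_unique N d z z₀ hN hN1 hd hz1 h hgz hz₀) (fun f => f)
    · exact h
    · exact absurd (key_unique N d z₀ z hN hN1 hd hz₀1 h hz₀ hgz) (fun f => f)
  · -- F < 0
    unfold F
    have hNz : 1 < N * z₀ := by
      have := hz₀l
      rw [div_lt_iff₀ hN] at this  -- 1 < s * N? no: 1/N < z₀ ↔ 1 < z₀ * N
      nlinarith
    have hsq : 0 < (1 - N * z₀) ^ 2 := by nlinarith
    have hz2 : z₀ ^ 2 - 1 > 0 := by nlinarith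
    have hz2' : z₀ ^ 2 - 1 < d ^ 2 := by
      have : z₀ ^ 2 < s ^ 2 := by nlinarith
      rw [hs2] at this; linarith
    have hfrac : 1 < d ^ 2 / (z₀ ^ 2 - 1) := by
      rw [lt_div_iff₀ hz2]; linarith
    exact mul_neg_of_pos_of_neg hsq (by linarith)
end

section
/- (Proposition 2) Let 0 < N < 1 and d > 0 with d² > N⁻² − 1, and let z₀₁ be the unique root of φ(z) = 0 in the interval I₂. Then: if 0 < A < −F(z₀₁), the dispersion relation F(z) + A = 0 has exactly four real solutions z with z² ≠ 1, exactly three of which lie in I₂ and one in I₁; while if A > −F(z₀₁), it has exactly two real solutions, one in I₁ and one in I₂. -/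
open Filter Topology Set

lemma F_hasDerivAt (N d : ℝ) (hN : N ≠ 0) (hd : d ≠ 0) (z : ℝ) (hz : z ^ 2 - 1 ≠ 0) :
    HasDerivAt (F N d) (-2 * N * d ^ 2 * (1 - N * z) * phi N d z) z := by
  have h1 : HasDerivAt (fun z : ℝ => (1 - N * z) ^ 2) (2 * (1 - N * z) * (-N)) z := by
    have h : HasDerivAt (fun z : ℝ => 1 - N * z) (-N) z := by
      simpa using ((hasDerivAt_id z).const_mul N).const_sub 1
    simpa using (h.fun_pow 2)
  have h2 : HasDerivAt (fun z : ℝ => 1 - d ^ 2 / (z ^ 2 - 1))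
      (d ^ 2 * (2 * z) / (z ^ 2 - 1) ^ 2) z := by
    have hz2 : HasDerivAt (fun z : ℝ => z ^ 2 - 1) (2 * z) z := by
      simpa using (hasDerivAt_pow 2 z).sub_const 1
    have := ((hz2.fun_inv hz).const_mul (d ^ 2)).const_sub 1
    convert this using 1
    · rfl
    · rfl
    · funext x; rw [div_eq_mul_inv]
    · field_simp
  have := h1.fun_mul h2
  refine this.congr_deriv ?_
  unfold phi
  field_simp
  ring

lemma phi_contAt (N d : ℝ) {z : ℝ} (hz : z ^ 2 - 1 ≠ 0) : ContinuousAt (phi N d) z := by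
  have h : ContinuousAt (fun z : ℝ => (z ^ 2 - 1) ^ 2) z := by fun_prop
  exact continuousAt_const.add
    ((ContinuousAt.sub continuousAt_const (continuousAt_id.div_const N)).div h
      (pow_ne_zero 2 hz))

lemma F_tendsto_atBot (N d c : ℝ) (hd : 0 < d) (l : Filter ℝ)
    (h1 : Filter.Tendsto (fun z => 1 - N * z) l (nhds c)) (hc : c ≠ 0)
    (h2 : Filter.Tendsto (fun z => z ^ 2 - 1) l (nhdsWithin 0 (Set.Ioi 0))) :
    Filter.Tendsto (F N d) l Filter.atBot := by
  have sq : Filter.Tendsto (fun z => (1 - N * z) ^ 2) l (nhds (c ^ 2)) := h1.pow 2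
  have hinv : Filter.Tendsto (fun z => (z ^ 2 - 1)⁻¹) l Filter.atTop :=
    h2.inv_tendsto_nhdsGT_zero
  have hmul : Filter.Tendsto (fun z => d ^ 2 * (z ^ 2 - 1)⁻¹) l Filter.atTop :=
    hinv.const_mul_atTop (by positivity)
  have hsub : Filter.Tendsto (fun z => 1 - d ^ 2 / (z ^ 2 - 1)) l Filter.atBot := by
    simp only [div_eq_mul_inv]
    have hneg : Filter.Tendsto (fun z => -(d ^ 2 * (z ^ 2 - 1)⁻¹)) l Filter.atBot :=
      Filter.tendsto_neg_atBot_iff.mpr hmul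
    simpa [sub_eq_add_neg] using Filter.tendsto_atBot_add_const_left l 1 hneg
  exact Filter.Tendsto.pos_mul_atBot (by positivity) sq hsub

lemma sq_sub_one_tendsto_right : Filter.Tendsto (fun z : ℝ => z ^ 2 - 1)
    (nhdsWithin 1 (Set.Ioi 1)) (nhdsWithin 0 (Set.Ioi 0)) := by
  apply tendsto_nhdsWithin_of_tendsto_nhds_of_eventually_within
  · have hc : Continuous fun z : ℝ => z ^ 2 - 1 := by fun_prop
    simpa using (hc.tendsto 1).mono_left nhdsWithin_le_nhds
  · filter_upwards [self_mem_nhdsWithin] with z hz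
    simp only [Set.mem_Ioi] at hz ⊢
    nlinarith

lemma sq_sub_one_tendsto_left : Filter.Tendsto (fun z : ℝ => z ^ 2 - 1)
    (nhdsWithin (-1) (Set.Iio (-1))) (nhdsWithin 0 (Set.Ioi 0)) := by
  apply tendsto_nhdsWithin_of_tendsto_nhds_of_eventually_within
  · have hc : Continuous fun z : ℝ => z ^ 2 - 1 := by fun_prop
    simpa using (hc.tendsto (-1)).mono_left nhdsWithin_le_nhds
  · filter_upwards [self_mem_nhdsWithin] with z hz
    simp only [Set.mem_Iio] at hz
    simp only [Set.mem_Ioi]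
    nlinarith

lemma phi_tendsto_atBot (N d : ℝ) (hN : 0 < N) (hN1 : N < 1) :
    Filter.Tendsto (phi N d) (nhdsWithin 1 (Set.Ioi 1)) Filter.atBot := by
  have h1 : Filter.Tendsto (fun z : ℝ => 1 - z / N) (nhdsWithin 1 (Set.Ioi 1))
      (nhds (1 - 1 / N)) := by
    have hc : Continuous fun z : ℝ => 1 - z / N := by fun_prop
    exact (hc.tendsto 1).mono_left nhdsWithin_le_nhds
  have h2 : Filter.Tendsto (fun z : ℝ => ((z ^ 2 - 1) ^ 2)⁻¹) (nhdsWithin 1 (Set.Ioi 1))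
      Filter.atTop := by
    apply Filter.Tendsto.inv_tendsto_nhdsGT_zero
    apply tendsto_nhdsWithin_of_tendsto_nhds_of_eventually_within
    · have hc : Continuous fun z : ℝ => (z ^ 2 - 1) ^ 2 := by fun_prop
      simpa using (hc.tendsto 1).mono_left nhdsWithin_le_nhds
    · filter_upwards [self_mem_nhdsWithin] with z hz
      simp only [Set.mem_Ioi] at hz ⊢
      have h : 0 < z ^ 2 - 1 := by nlinarith
      positivity
  have hc0 : 1 - 1 / N < 0 := by
    have : 1 < 1 / N := one_lt_one_div hN hN1
    linarith
  have hmul : Filter.Tendsto (fun z : ℝ => (1 - z / N) * ((z ^ 2 - 1) ^ 2)⁻¹)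
      (nhdsWithin 1 (Set.Ioi 1)) Filter.atBot :=
    Filter.Tendsto.neg_mul_atTop hc0 h1 h2
  have := Filter.tendsto_atBot_add_const_left (nhdsWithin 1 (Set.Ioi 1)) (1 / d ^ 2) hmul
  unfold phi
  simpa [div_eq_mul_inv] using this

set_option maxHeartbeats 2000000 in
/-- Proposition 2: for `0 < N < 1`, `d² > N⁻² - 1`, and `z₀₁` the unique root of
`φ = 0` in `I₂`: if `0 < A < -F(z₀₁)` the dispersion relation has exactly four real
solutions with `z² ≠ 1` (three in `I₂`, one in `I₁`); if `A > -F(z₀₁)` it has exactly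
two (one in `I₁`, one in `I₂`). -/
theorem stmt_10 (N d A z₀₁ : ℝ) (hN : 0 < N) (hN1 : N < 1) (hd : 0 < d)
    (hcase : 1 / N ^ 2 - 1 < d ^ 2)
    (hz₀₁ : z₀₁ ∈ I₂ d) (hroot : phi N d z₀₁ = 0)
    (huniq : ∀ z ∈ I₂ d, phi N d z = 0 → z = z₀₁)
    (hA : 0 < A) :
    (A < -F N d z₀₁ →
      {z : ℝ | z ^ 2 ≠ 1 ∧ F N d z + A = 0}.ncard = 4 ∧
      {z : ℝ | z ∈ I₂ d ∧ F N d z + A = 0}.ncard = 3 ∧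
      {z : ℝ | z ∈ I₁ d ∧ F N d z + A = 0}.ncard = 1) ∧
    (-F N d z₀₁ < A →
      {z : ℝ | z ^ 2 ≠ 1 ∧ F N d z + A = 0}.ncard = 2 ∧
      {z : ℝ | z ∈ I₂ d ∧ F N d z + A = 0}.ncard = 1 ∧
      {z : ℝ | z ∈ I₁ d ∧ F N d z + A = 0}.ncard = 1) := by
  set r := Real.sqrt (1 + d ^ 2) with hr_def
  have hr2 : r ^ 2 = 1 + d ^ 2 := Real.sq_sqrt (by positivity)
  clear_value r
  have hr1 : 1 < r := by nlinarith [Real.sqrt_nonneg (1 + d ^ 2)]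
  have hN1' : 1 < 1 / N := one_lt_one_div hN hN1
  have hNr : 1 / N < r := by
    by_contra h
    push_neg at h
    have h1 : 0 ≤ (1 / N - r) * (1 / N + r) :=
      mul_nonneg (by linarith) (by positivity)
    have hcase' : (1 / N) ^ 2 - 1 < d ^ 2 := by
      rw [show ((1:ℝ) / N) ^ 2 = 1 / N ^ 2 by ring]; exact hcase
    nlinarith [h1, hcase', hr2]
  have hmemI₂ : ∀ z : ℝ, z ∈ I₂ d ↔ 1 < z ∧ z < r := by
    intro z; rw [I₂, ← hr_def]; exact Set.mem_Ioo
  have hmemI₁ : ∀ z : ℝ, z ∈ I₁ d ↔ -r < z ∧ z < -1 := by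
    intro z; rw [I₁, ← hr_def]; exact Set.mem_Ioo
  obtain ⟨hz1, hz2⟩ : 1 < z₀₁ ∧ z₀₁ < r := (hmemI₂ z₀₁).mp hz₀₁
  -- values
  have hFr : F N d r = 0 := by
    have h : r ^ 2 - 1 = d ^ 2 := by rw [hr2]; ring
    rw [F, h, div_self (by positivity)]; ring
  have hFnr : F N d (-r) = 0 := by
    have h : (-r) ^ 2 - 1 = d ^ 2 := by rw [neg_pow, hr2]; ring
    rw [F, h, div_self (by positivity)]; ring
  have hFN : F N d (1 / N) = 0 := by
    have h : 1 - N * (1 / N) = 0 := by field_simp; ring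
    rw [F, h]; ring
  have hphir : 0 < phi N d r := by
    have h4 : (r ^ 2 - 1) ^ 2 = (d ^ 2) ^ 2 := by rw [hr2]; ring
    have e : phi N d r = (d ^ 2 + 1 - r / N) / (d ^ 2) ^ 2 := by
      rw [phi, h4]; field_simp; ring
    rw [e]
    apply div_pos _ (by positivity)
    have h5 : r / N = r * (1 / N) := by ring
    nlinarith [mul_pos (by linarith : (0:ℝ) < r) (by linarith : 0 < r - 1 / N)]
  have hphiN : phi N d (1 / N) < 0 := by
    have hu : 0 < 1 / N ^ 2 - 1 := by
      have : 1 < 1 / N ^ 2 := by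
        rw [lt_div_iff₀ (by positivity)]
        nlinarith
      linarith
    have hne2 : ((1:ℝ) / N) ^ 2 - 1 ≠ 0 := by
      rw [show ((1:ℝ) / N) ^ 2 - 1 = 1 / N ^ 2 - 1 by ring]
      exact hu.ne'
    have e : phi N d (1 / N) = 1 / d ^ 2 - 1 / (1 / N ^ 2 - 1) := by
      have hN2 : (1:ℝ) - N ^ 2 ≠ 0 := by nlinarith
      rw [phi]
      field_simp
      ring
    rw [e]
    have := one_div_lt_one_div_of_lt hu hcase
    linarith
  -- sign of phi on I₂
  have hsq : ∀ z : ℝ, 1 < z → z ^ 2 - 1 ≠ 0 := by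
    intro z hz; nlinarith
  have hcontphi : ∀ a b : ℝ, 1 < a → ContinuousOn (phi N d) (Set.Icc a b) := by
    intro a b ha
    intro x hx
    exact (phi_contAt N d (hsq x (by cases hx with | intro h1 h2 => linarith))).continuousWithinAt
  have hphi_neg : ∀ z : ℝ, 1 < z → z < z₀₁ → phi N d z < 0 := by
    intro z hz hzlt
    by_contra h
    push_neg at h
    have hev1 : ∀ᶠ w in nhdsWithin 1 (Set.Ioi (1:ℝ)), phi N d w < 0 :=
      (phi_tendsto_atBot N d hN hN1).eventually (Filter.eventually_lt_atBot 0)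
    have hev2 : ∀ᶠ w in nhdsWithin 1 (Set.Ioi (1:ℝ)), w < z :=
      (eventually_lt_nhds hz).filter_mono nhdsWithin_le_nhds
    have hev3 : ∀ᶠ w in nhdsWithin 1 (Set.Ioi (1:ℝ)), 1 < w :=
      eventually_mem_nhdsWithin
    obtain ⟨w, hwF, hwz, hw1⟩ := (hev1.and (hev2.and hev3)).exists
    obtain ⟨c, hc, hc0⟩ := intermediate_value_Icc (le_of_lt hwz) (hcontphi w z hw1)
      (Set.mem_Icc.mpr ⟨le_of_lt hwF, h⟩)
    obtain ⟨hc1, hc2⟩ := hc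
    have hcI : c ∈ I₂ d := (hmemI₂ c).mpr ⟨by linarith, by linarith⟩
    have heq := huniq c hcI hc0
    rw [heq] at hc2
    linarith
  have hphi_pos : ∀ z : ℝ, z₀₁ < z → z ≤ r → 0 < phi N d z := by
    intro z hzgt hzr
    by_contra h
    push_neg at h
    obtain ⟨c, hc, hc0⟩ := intermediate_value_Icc hzr (hcontphi z r (by linarith))
      (Set.mem_Icc.mpr ⟨h, le_of_lt hphir⟩)
    obtain ⟨hc1, hc2⟩ := hc
    have hcr : c ≠ r := by
      intro he; rw [he] at hc0; linarith
    have hcI : c ∈ I₂ d := (hmemI₂ c).mpr ⟨by linarith, lt_of_le_of_ne hc2 hcr⟩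
    have heq := huniq c hcI hc0
    rw [heq] at hc1
    linarith
  have hNz : 1 / N < z₀₁ := by
    by_contra h
    push_neg at h
    rcases eq_or_lt_of_le h with he | hlt
    · rw [he] at hroot; linarith
    · linarith [hphi_pos (1 / N) hlt (le_of_lt hNr)]
  have hFz01 : F N d z₀₁ < 0 := by
    have h1 : (1 - N * z₀₁) ^ 2 > 0 := by
      have : N * z₀₁ > 1 := by
        have := (div_lt_iff₀ hN).mp hNz
        linarith [mul_comm z₀₁ N]
      nlinarith
    have hu : 0 < z₀₁ ^ 2 - 1 := by nlinarith
    have hu2 : z₀₁ ^ 2 - 1 < d ^ 2 := by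
      have hp2 : z₀₁ ^ 2 < r ^ 2 := sq_lt_sq' (by linarith) hz2
      linarith [hr2, hp2]
    have h2 : 1 - d ^ 2 / (z₀₁ ^ 2 - 1) < 0 := by
      have := (one_lt_div hu).mpr hu2
      linarith
    rw [F]
    exact mul_neg_of_pos_of_neg h1 h2
  -- derivative and continuity tools
  have hNne : N ≠ 0 := hN.ne'
  have hdne : d ≠ 0 := hd.ne'
  have hderiv : ∀ x : ℝ, x ^ 2 - 1 ≠ 0 →
      deriv (F N d) x = -2 * N * d ^ 2 * (1 - N * x) * phi N d x :=
    fun x hx => (F_hasDerivAt N d hNne hdne x hx).deriv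
  have hcontF : ∀ s : Set ℝ, (∀ x ∈ s, x ^ 2 - 1 ≠ 0) → ContinuousOn (F N d) s :=
    fun s hs x hx =>
      ((F_hasDerivAt N d hNne hdne x (hs x hx)).continuousAt).continuousWithinAt
  have hsqneg : ∀ x : ℝ, x < -1 → x ^ 2 - 1 ≠ 0 := by intro x hx; nlinarith
  -- monotonicity on the four branches
  have M1 : StrictMonoOn (F N d) (Set.Ioc 1 (1 / N)) := by
    apply strictMonoOn_of_deriv_pos (convex_Ioc 1 (1 / N))
    · exact hcontF _ (fun x hx => hsq x hx.1)
    · intro x hx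
      rw [interior_Ioc] at hx
      obtain ⟨hx1, hx2⟩ := hx
      rw [hderiv x (hsq x hx1)]
      have hphix : phi N d x < 0 := hphi_neg x hx1 (by linarith)
      have hNx : 0 < 1 - N * x := by
        have h := mul_lt_mul_of_pos_left hx2 hN
        rw [mul_one_div, div_self hNne] at h
        linarith
      nlinarith [mul_pos (mul_pos hN (pow_pos hd 2))
        (mul_pos hNx (neg_pos.mpr hphix))]
  have M2 : StrictAntiOn (F N d) (Set.Icc (1 / N) z₀₁) := by
    apply strictAntiOn_of_deriv_neg (convex_Icc (1 / N) z₀₁)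
    · exact hcontF _ (fun x hx => hsq x (lt_of_lt_of_le hN1' hx.1))
    · intro x hx
      rw [interior_Icc] at hx
      obtain ⟨hx1, hx2⟩ := hx
      have hx1' : 1 < x := lt_trans hN1' hx1
      rw [hderiv x (hsq x hx1')]
      have hphix : phi N d x < 0 := hphi_neg x hx1' hx2
      have hNx : 1 - N * x < 0 := by
        have h := mul_lt_mul_of_pos_left hx1 hN
        rw [mul_one_div, div_self hNne] at h
        linarith
      nlinarith [mul_pos (mul_pos hN (pow_pos hd 2))
        (mul_pos (neg_pos.mpr hNx) (neg_pos.mpr hphix))]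
  have M3 : StrictMonoOn (F N d) (Set.Icc z₀₁ r) := by
    apply strictMonoOn_of_deriv_pos (convex_Icc z₀₁ r)
    · exact hcontF _ (fun x hx => hsq x (lt_of_lt_of_le hz1 hx.1))
    · intro x hx
      rw [interior_Icc] at hx
      obtain ⟨hx1, hx2⟩ := hx
      rw [hderiv x (hsq x (lt_trans hz1 hx1))]
      have hphix : 0 < phi N d x := hphi_pos x hx1 (le_of_lt hx2)
      have hNx : 1 - N * x < 0 := by
        have h := mul_lt_mul_of_pos_left (lt_trans hNz hx1) hN
        rw [mul_one_div, div_self hNne] at h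
        linarith
      nlinarith [mul_pos (mul_pos hN (pow_pos hd 2))
        (mul_pos (neg_pos.mpr hNx) hphix)]
  have M4 : StrictAntiOn (F N d) (Set.Ico (-r) (-1)) := by
    apply strictAntiOn_of_deriv_neg (convex_Ico (-r) (-1))
    · exact hcontF _ (fun x hx => hsqneg x hx.2)
    · intro x hx
      rw [interior_Ico] at hx
      obtain ⟨hx1, hx2⟩ := hx
      rw [hderiv x (hsqneg x hx2)]
      have hNx : 0 < 1 - N * x := by
        have : N * x < 0 := mul_neg_of_pos_of_neg hN (by linarith)
        linarith
      have hphix : 0 < phi N d x := by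
        have hzn : x / N < 0 := div_neg_of_neg_of_pos (by linarith) hN
        have h1x : 0 < 1 - x / N := by linarith
        have hx21 : 0 < x ^ 2 - 1 := by nlinarith
        rw [phi]
        have h2 : 0 < (x ^ 2 - 1) ^ 2 := by positivity
        exact add_pos (by positivity) (div_pos h1x h2)
      nlinarith [mul_pos (mul_pos hN (pow_pos hd 2)) (mul_pos hNx hphix)]
  -- existence of the solution b₁ ∈ (1, 1/N)
  have hT2 : Filter.Tendsto (F N d) (nhdsWithin 1 (Set.Ioi 1)) Filter.atBot := by
    apply F_tendsto_atBot N d (1 - N) hd _ _ (by linarith) sq_sub_one_tendsto_right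
    have hc : Continuous fun z : ℝ => 1 - N * z := by fun_prop
    have := (hc.tendsto 1).mono_left (nhdsWithin_le_nhds (s := Set.Ioi (1:ℝ)))
    simpa using this
  have hev1 : ∀ᶠ w in nhdsWithin 1 (Set.Ioi (1:ℝ)), F N d w < -A :=
    hT2.eventually (Filter.eventually_lt_atBot (-A))
  have hev2 : ∀ᶠ w in nhdsWithin 1 (Set.Ioi (1:ℝ)), w < 1 / N :=
    (eventually_lt_nhds hN1').filter_mono nhdsWithin_le_nhds
  have hev3 : ∀ᶠ w in nhdsWithin 1 (Set.Ioi (1:ℝ)), 1 < w := eventually_mem_nhdsWithin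
  obtain ⟨w, hwF, hwN, hw1⟩ := (hev1.and (hev2.and hev3)).exists
  obtain ⟨b₁, hb₁mem, hb₁⟩ := intermediate_value_Icc (le_of_lt hwN)
    (hcontF _ (fun x hx => hsq x (lt_of_lt_of_le hw1 hx.1)))
    (Set.mem_Icc.mpr ⟨le_of_lt hwF, by rw [hFN]; linarith⟩)
  have hb₁w : w < b₁ := lt_of_le_of_ne hb₁mem.1 (fun he => by rw [← he] at hb₁; linarith)
  have hb₁N : b₁ < 1 / N := lt_of_le_of_ne hb₁mem.2
    (fun he => by rw [he, hFN] at hb₁; linarith)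
  have hb₁1 : 1 < b₁ := lt_trans hw1 hb₁w
  -- existence of the solution a ∈ I₁
  have hT1 : Filter.Tendsto (F N d) (nhdsWithin (-1) (Set.Iio (-1))) Filter.atBot := by
    apply F_tendsto_atBot N d (1 - N * (-1)) hd _ _ (by nlinarith) sq_sub_one_tendsto_left
    have hc : Continuous fun z : ℝ => 1 - N * z := by fun_prop
    exact (hc.tendsto (-1)).mono_left nhdsWithin_le_nhds
  have hev4 : ∀ᶠ w in nhdsWithin (-1) (Set.Iio (-1:ℝ)), F N d w < -A :=
    hT1.eventually (Filter.eventually_lt_atBot (-A))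
  have hev5 : ∀ᶠ w in nhdsWithin (-1) (Set.Iio (-1:ℝ)), -r < w :=
    (eventually_gt_nhds (by linarith : -r < -1)).filter_mono nhdsWithin_le_nhds
  have hev6 : ∀ᶠ w in nhdsWithin (-1) (Set.Iio (-1:ℝ)), w < -1 := eventually_mem_nhdsWithin
  obtain ⟨v, hvF, hvr, hv1⟩ := (hev4.and (hev5.and hev6)).exists
  obtain ⟨a, hamem, ha⟩ := intermediate_value_Icc' (le_of_lt hvr)
    (hcontF _ (fun x hx => hsqneg x (lt_of_le_of_lt hx.2 hv1)))
    (Set.mem_Icc.mpr ⟨le_of_lt hvF, by rw [hFnr]; linarith⟩)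
  have har : -r < a := lt_of_le_of_ne hamem.1
    (fun he => by rw [← he, hFnr] at ha; linarith)
  have hav : a ≤ v := hamem.2
  have ha1 : a < -1 := lt_of_le_of_lt hav hv1
  have haI : a ∈ I₁ d := (hmemI₁ a).mpr ⟨har, ha1⟩
  -- uniqueness in I₁ and the I₁ solution set
  have hS₁ : {z : ℝ | z ∈ I₁ d ∧ F N d z + A = 0} = {a} := by
    ext z
    simp only [Set.mem_setOf_eq, Set.mem_singleton_iff]
    constructor
    · rintro ⟨hzI, hzF⟩
      obtain ⟨hz1', hz2'⟩ := (hmemI₁ z).mp hzI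
      exact M4.injOn ⟨le_of_lt hz1', hz2'⟩ ⟨le_of_lt har, ha1⟩ (by rw [ha]; linarith)
    · rintro rfl
      exact ⟨haI, by rw [ha]; ring⟩
  -- range lemma: any solution lies in I₁ ∪ I₂
  have hrange : ∀ z : ℝ, z ^ 2 ≠ 1 → F N d z = -A → z ∈ I₁ d ∨ z ∈ I₂ d := by
    intro z hzne hFz
    have hFz' : F N d z < 0 := by rw [hFz]; linarith
    have h1 : 0 < z ^ 2 - 1 := by
      rcases lt_trichotomy (z ^ 2 - 1) 0 with h | h | h
      · exfalso
        have hq : d ^ 2 / (z ^ 2 - 1) ≤ 0 :=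
          div_nonpos_of_nonneg_of_nonpos (by positivity) (le_of_lt h)
        have : 0 ≤ F N d z := by
          rw [F]; exact mul_nonneg (sq_nonneg _) (by linarith)
        linarith
      · exact absurd (by linarith : z ^ 2 = 1) hzne
      · exact h
    have h2 : z ^ 2 - 1 < d ^ 2 := by
      by_contra hcon
      push_neg at hcon
      have hq : d ^ 2 / (z ^ 2 - 1) ≤ 1 := (div_le_one h1).mpr hcon
      have : 0 ≤ F N d z := by
        rw [F]; exact mul_nonneg (sq_nonneg _) (by linarith)
      linarith
    have habs2 : |z| < r := by
      apply lt_of_pow_lt_pow_left₀ 2 (by linarith : (0:ℝ) ≤ r)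
      rw [sq_abs]; linarith [hr2]
    have habs1 : 1 < |z| := by
      apply lt_of_pow_lt_pow_left₀ 2 (abs_nonneg z)
      rw [sq_abs]; simpa using (by linarith : 1 < z ^ 2)
    rcases le_or_gt 0 z with hz0 | hz0
    · right
      rw [abs_of_nonneg hz0] at habs1 habs2
      exact (hmemI₂ z).mpr ⟨habs1, habs2⟩
    · left
      rw [abs_of_neg hz0] at habs1 habs2
      exact (hmemI₁ z).mpr ⟨by linarith, by linarith⟩
  constructor
  · -- case 0 < A < -F(z₀₁)
    intro hAc
    have hAc' : F N d z₀₁ < -A := by linarith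
    -- b₂ ∈ (1/N, z₀₁)
    obtain ⟨b₂, hb₂mem, hb₂⟩ := intermediate_value_Icc' (le_of_lt hNz)
      (hcontF _ (fun x hx => hsq x (lt_of_lt_of_le hN1' hx.1)))
      (Set.mem_Icc.mpr ⟨le_of_lt hAc', by rw [hFN]; linarith⟩)
    have hb₂1 : 1 / N < b₂ := lt_of_le_of_ne hb₂mem.1
      (fun he => by rw [← he, hFN] at hb₂; linarith)
    have hb₂2 : b₂ < z₀₁ := lt_of_le_of_ne hb₂mem.2
      (fun he => by rw [he] at hb₂; linarith)
    -- b₃ ∈ (z₀₁, r)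
    obtain ⟨b₃, hb₃mem, hb₃⟩ := intermediate_value_Icc (le_of_lt hz2)
      (hcontF _ (fun x hx => hsq x (lt_of_lt_of_le hz1 hx.1)))
      (Set.mem_Icc.mpr ⟨le_of_lt hAc', by rw [hFr]; linarith⟩)
    have hb₃1 : z₀₁ < b₃ := lt_of_le_of_ne hb₃mem.1
      (fun he => by rw [← he] at hb₃; linarith)
    have hb₃2 : b₃ < r := lt_of_le_of_ne hb₃mem.2
      (fun he => by rw [he, hFr] at hb₃; linarith)
    have hS₂ : {z : ℝ | z ∈ I₂ d ∧ F N d z + A = 0} = {b₁, b₂, b₃} := by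
      ext z
      simp only [Set.mem_setOf_eq, Set.mem_insert_iff, Set.mem_singleton_iff]
      constructor
      · rintro ⟨hzI, hzF⟩
        obtain ⟨hz1', hz2'⟩ := (hmemI₂ z).mp hzI
        have hFz : F N d z = -A := by linarith
        rcases lt_trichotomy z (1 / N) with h | h | h
        · left
          exact M1.injOn ⟨hz1', le_of_lt h⟩ ⟨hb₁1, le_of_lt hb₁N⟩ (by rw [hFz, hb₁])
        · exfalso; rw [h, hFN] at hFz; linarith
        · rcases lt_trichotomy z z₀₁ with h2 | h2 | h2
          · right; left
            exact M2.injOn ⟨le_of_lt h, le_of_lt h2⟩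
              ⟨le_of_lt hb₂1, le_of_lt hb₂2⟩ (by rw [hFz, hb₂])
          · exfalso; rw [h2] at hFz; linarith
          · right; right
            exact M3.injOn ⟨le_of_lt h2, le_of_lt hz2'⟩
              ⟨le_of_lt hb₃1, le_of_lt hb₃2⟩ (by rw [hFz, hb₃])
      · rintro (rfl | rfl | rfl)
        · exact ⟨(hmemI₂ z).mpr ⟨hb₁1, by linarith⟩, by rw [hb₁]; ring⟩
        · exact ⟨(hmemI₂ z).mpr ⟨by linarith, by linarith⟩, by rw [hb₂]; ring⟩
        · exact ⟨(hmemI₂ z).mpr ⟨by linarith, hb₃2⟩, by rw [hb₃]; ring⟩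
    have hSall : {z : ℝ | z ^ 2 ≠ 1 ∧ F N d z + A = 0} = {a, b₁, b₂, b₃} := by
      ext z
      simp only [Set.mem_setOf_eq, Set.mem_insert_iff, Set.mem_singleton_iff]
      constructor
      · rintro ⟨hzne, hzF⟩
        rcases hrange z hzne (by linarith) with hzI | hzI
        · left
          have : z ∈ {z : ℝ | z ∈ I₁ d ∧ F N d z + A = 0} := ⟨hzI, hzF⟩
          rw [hS₁] at this
          exact this
        · right
          have : z ∈ {z : ℝ | z ∈ I₂ d ∧ F N d z + A = 0} := ⟨hzI, hzF⟩
          rw [hS₂] at this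
          simpa using this
      · have hsol : ∀ y : ℝ, 1 < y → y < r → F N d y = -A → y ^ 2 ≠ 1 ∧ F N d y + A = 0 :=
          fun y hy1 _ hyF => ⟨(by nlinarith : (1:ℝ) < y ^ 2).ne', by rw [hyF]; ring⟩
        rintro (rfl | rfl | rfl | rfl)
        · exact ⟨(by nlinarith : (1:ℝ) < z ^ 2).ne', by rw [ha]; ring⟩
        · exact hsol z hb₁1 (by linarith) hb₁
        · exact hsol z (by linarith) (by linarith) hb₂
        · exact hsol z (by linarith) hb₃2 hb₃
    refine ⟨?_, ?_, ?_⟩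
    · rw [hSall]
      rw [Set.ncard_insert_of_notMem (by
          simp only [Set.mem_insert_iff, Set.mem_singleton_iff]
          push_neg
          refine ⟨by linarith, by linarith, by linarith⟩),
        Set.ncard_insert_of_notMem (by
          simp only [Set.mem_insert_iff, Set.mem_singleton_iff]
          push_neg
          refine ⟨by linarith, by linarith⟩),
        Set.ncard_insert_of_notMem (by
          simp only [Set.mem_singleton_iff]
          intro h; linarith),
        Set.ncard_singleton]
    · rw [hS₂]
      rw [Set.ncard_insert_of_notMem (by
          simp only [Set.mem_insert_iff, Set.mem_singleton_iff]
          push_neg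
          refine ⟨by linarith, by linarith⟩),
        Set.ncard_insert_of_notMem (by
          simp only [Set.mem_singleton_iff]
          intro h; linarith),
        Set.ncard_singleton]
    · rw [hS₁, Set.ncard_singleton]
  · -- case A > -F(z₀₁)
    intro hAc
    have hAc' : -A < F N d z₀₁ := by linarith
    have hS₂ : {z : ℝ | z ∈ I₂ d ∧ F N d z + A = 0} = {b₁} := by
      ext z
      simp only [Set.mem_setOf_eq, Set.mem_singleton_iff]
      constructor
      · rintro ⟨hzI, hzF⟩
        obtain ⟨hz1', hz2'⟩ := (hmemI₂ z).mp hzI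
        have hFz : F N d z = -A := by linarith
        rcases lt_trichotomy z (1 / N) with h | h | h
        · exact M1.injOn ⟨hz1', le_of_lt h⟩ ⟨hb₁1, le_of_lt hb₁N⟩ (by rw [hFz, hb₁])
        · exfalso; rw [h, hFN] at hFz; linarith
        · exfalso
          rcases lt_trichotomy z z₀₁ with h2 | h2 | h2
          · have := M2 ⟨le_of_lt h, le_of_lt h2⟩ ⟨le_of_lt (lt_trans h h2), le_refl z₀₁⟩ h2
            linarith
          · rw [h2] at hFz; linarith
          · have := M3 ⟨le_refl z₀₁, le_of_lt hz2⟩ ⟨le_of_lt h2, le_of_lt hz2'⟩ h2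
            linarith
      · rintro rfl
        exact ⟨(hmemI₂ z).mpr ⟨hb₁1, by linarith⟩, by rw [hb₁]; ring⟩
    have hSall : {z : ℝ | z ^ 2 ≠ 1 ∧ F N d z + A = 0} = {a, b₁} := by
      ext z
      simp only [Set.mem_setOf_eq, Set.mem_insert_iff, Set.mem_singleton_iff]
      constructor
      · rintro ⟨hzne, hzF⟩
        rcases hrange z hzne (by linarith) with hzI | hzI
        · left
          have : z ∈ {z : ℝ | z ∈ I₁ d ∧ F N d z + A = 0} := ⟨hzI, hzF⟩
          rw [hS₁] at this
          exact this
        · right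
          have : z ∈ {z : ℝ | z ∈ I₂ d ∧ F N d z + A = 0} := ⟨hzI, hzF⟩
          rw [hS₂] at this
          exact this
      · rintro (rfl | rfl)
        · exact ⟨(by nlinarith : (1:ℝ) < z ^ 2).ne', by rw [ha]; ring⟩
        · exact ⟨(by nlinarith : (1:ℝ) < z ^ 2).ne', by rw [hb₁]; ring⟩
    refine ⟨?_, ?_, ?_⟩
    · rw [hSall]
      rw [Set.ncard_insert_of_notMem (by
          simp only [Set.mem_singleton_iff]
          intro h; linarith),
        Set.ncard_singleton]
    · rw [hS₂, Set.ncard_singleton]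
    · rw [hS₁, Set.ncard_singleton]
end

section
/- Let N > 1 and d > 0 with d² > (16N²/27)·((8N² − 6)·√(1 − 3/(4N²)) + 8N² − 9). Then the equation φ(z) = 0 has exactly two roots z₀₂ < z₀₃ in the interval I₂ = (1, √(1+d²)); F has a local maximum at z₀₂ and a local minimum at z₀₃, and F(z₀₃) < F(z₀₂) < 0. -/
lemma helper_max {f f' : ℝ → ℝ} {a b c : ℝ} (hab : a < b) (hbc : b < c)
    (hder : ∀ x ∈ Set.Icc a c, HasDerivAt f (f' x) x)
    (h1 : ∀ x ∈ Set.Ioo a b, 0 ≤ f' x) (h2 : ∀ x ∈ Set.Ioo b c, f' x ≤ 0) :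
    IsLocalMax f b := by
  have hsub1 : Set.Icc a b ⊆ Set.Icc a c := Set.Icc_subset_Icc le_rfl hbc.le
  have hsub2 : Set.Icc b c ⊆ Set.Icc a c := Set.Icc_subset_Icc hab.le le_rfl
  have hcont : ContinuousOn f (Set.Icc a c) := fun x hx =>
    (hder x hx).continuousAt.continuousWithinAt
  have hmono : MonotoneOn f (Set.Icc a b) := by
    apply monotoneOn_of_deriv_nonneg (convex_Icc a b) (hcont.mono hsub1)
    · intro x hx
      rw [interior_Icc] at hx
      exact (hder x (hsub1 (Set.Ioo_subset_Icc_self hx))).differentiableAt.differentiableWithinAt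
    · intro x hx
      rw [interior_Icc] at hx
      rw [(hder x (hsub1 (Set.Ioo_subset_Icc_self hx))).deriv]
      exact h1 x hx
  have hanti : AntitoneOn f (Set.Icc b c) := by
    apply antitoneOn_of_deriv_nonpos (convex_Icc b c) (hcont.mono hsub2)
    · intro x hx
      rw [interior_Icc] at hx
      exact (hder x (hsub2 (Set.Ioo_subset_Icc_self hx))).differentiableAt.differentiableWithinAt
    · intro x hx
      rw [interior_Icc] at hx
      rw [(hder x (hsub2 (Set.Ioo_subset_Icc_self hx))).deriv]
      exact h2 x hx
  have hnb : Set.Ioo a c ∈ nhds b := Ioo_mem_nhds hab hbc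
  filter_upwards [hnb] with x hx
  rcases le_total x b with h | h
  · exact hmono ⟨hx.1.le, h⟩ ⟨hab.le, le_rfl⟩ h
  · exact hanti ⟨le_rfl, hbc.le⟩ ⟨h, hx.2.le⟩ h

lemma helper_min {f f' : ℝ → ℝ} {a b c : ℝ} (hab : a < b) (hbc : b < c)
    (hder : ∀ x ∈ Set.Icc a c, HasDerivAt f (f' x) x)
    (h1 : ∀ x ∈ Set.Ioo a b, f' x ≤ 0) (h2 : ∀ x ∈ Set.Ioo b c, 0 ≤ f' x) :
    IsLocalMin f b := by
  have := helper_max (f := fun x => -f x) (f' := fun x => -f' x) hab hbc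
    (fun x hx => (hder x hx).neg)
    (fun x hx => by simpa using h1 x hx) (fun x hx => by simpa using h2 x hx)
  simpa using this.neg

lemma F_deriv (N d : ℝ) {z : ℝ} (hz : z ^ 2 - 1 ≠ 0) :
    HasDerivAt (F N d)
      (2 * (N * z - 1) * (N * (z ^ 2 - 1) ^ 2 + d ^ 2 * (N - z)) / (z ^ 2 - 1) ^ 2) z := by
  have h1 : HasDerivAt (fun z : ℝ => (1 - N * z) ^ 2) (2 * (1 - N * z) ^ 1 * (-N)) z := by
    have : HasDerivAt (fun z : ℝ => 1 - N * z) (-N) z := by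
      simpa using ((hasDerivAt_id z).const_mul N).const_sub 1
    simpa using this.fun_pow 2
  have h2 : HasDerivAt (fun z : ℝ => z ^ 2 - 1) (2 * z) z := by
    simpa using (hasDerivAt_pow 2 z).sub_const 1
  have h3 : HasDerivAt (fun z : ℝ => 1 - d ^ 2 / (z ^ 2 - 1))
      (-((0 * (z ^ 2 - 1) - d ^ 2 * (2 * z)) / (z ^ 2 - 1) ^ 2)) z :=
    ((hasDerivAt_const z (d ^ 2)).div h2 hz).const_sub 1
  have := h1.fun_mul h3
  refine this.congr_deriv ?_
  field_simp
  ring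

set_option maxHeartbeats 1000000 in
/-- For `N > 1` and `d² > (16N²/27)((8N² - 6)√(1 - 3/(4N²)) + 8N² - 9)`, the equation
`φ(z) = 0` has exactly two roots `z₀₂ < z₀₃` in `I₂`; `F` has a local maximum at `z₀₂`,
a local minimum at `z₀₃`, and `F(z₀₃) < F(z₀₂) < 0`. -/
theorem stmt_14 (N d : ℝ) (hN : 1 < N) (hd : 0 < d)
    (hcase : (16 * N ^ 2 / 27) *
        ((8 * N ^ 2 - 6) * Real.sqrt (1 - 3 / (4 * N ^ 2)) + 8 * N ^ 2 - 9)
      < d ^ 2) :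
    ∃ z₀₂ z₀₃ : ℝ, z₀₂ < z₀₃ ∧ z₀₂ ∈ I₂ d ∧ z₀₃ ∈ I₂ d ∧
      phi N d z₀₂ = 0 ∧ phi N d z₀₃ = 0 ∧
      (∀ z ∈ I₂ d, phi N d z = 0 → z = z₀₂ ∨ z = z₀₃) ∧
      IsLocalMax (F N d) z₀₂ ∧ IsLocalMin (F N d) z₀₃ ∧
      F N d z₀₃ < F N d z₀₂ ∧ F N d z₀₂ < 0 := by
  have hN0 : (0:ℝ) < N := by linarith
  have hNne : N ≠ 0 := ne_of_gt hN0
  have hd2 : (0:ℝ) < d ^ 2 := by positivity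
  obtain ⟨g, hg_def⟩ : ∃ g : ℝ → ℝ, g = fun z => N * (z ^ 2 - 1) ^ 2 + d ^ 2 * (N - z) :=
    ⟨_, rfl⟩
  have hgc : Continuous g := by rw [hg_def]; fun_prop
  obtain ⟨s, hs_def⟩ : ∃ s : ℝ, s = Real.sqrt (4 * N ^ 2 - 3) := ⟨_, rfl⟩
  have hs2 : s ^ 2 = 4 * N ^ 2 - 3 := by rw [hs_def]; exact Real.sq_sqrt (by nlinarith)
  have hs0 : 0 ≤ s := hs_def ▸ Real.sqrt_nonneg _
  have hsN : N < s := by nlinarith [hs2, hs0]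
  obtain ⟨p, hp_def⟩ : ∃ p : ℝ, p = (2 * N + s) / 3 := ⟨_, rfl⟩
  have hpN : N < p := by rw [hp_def]; linarith
  have hp1 : 1 < p := lt_trans hN hpN
  have h3p : 3 * p ^ 2 - 4 * N * p + 1 = 0 := by
    rw [hp_def]; linear_combination hs2 / 3
  have hsqrt_eq : Real.sqrt (1 - 3 / (4 * N ^ 2)) = s / (2 * N) := by
    have h1 : 1 - 3 / (4 * N ^ 2) = (4 * N ^ 2 - 3) / (2 * N) ^ 2 := by
      rw [eq_div_iff (by positivity : ((2*N)^2:ℝ) ≠ 0)]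
      field_simp
      ring
    rw [h1, Real.sqrt_div (by nlinarith) ((2*N)^2), Real.sqrt_sq (by linarith), ← hs_def]
  have hcase' : 4 * N * p * (p ^ 2 - 1) < d ^ 2 := by
    have h27 : 4 * N * p * (p ^ 2 - 1) =
        (16 * N ^ 2 / 27) * ((8 * N ^ 2 - 6) * (s / (2 * N)) + 8 * N ^ 2 - 9) := by
      rw [hp_def]
      field_simp
      linear_combination 216 * (6 * N + s) * hs2
    rw [h27, ← hsqrt_eq]
    exact hcase
  -- values of g
  have hg1 : 0 < g 1 := by
    have : g 1 = d ^ 2 * (N - 1) := by simp [hg_def]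
    rw [this]
    have : 0 < N - 1 := by linarith
    positivity
  have hp2 : 0 < p ^ 2 - 1 := by nlinarith
  have hgp : g p < 0 := by
    have h1 : d ^ 2 * (N - p) < 4 * N * p * (p ^ 2 - 1) * (N - p) :=
      mul_lt_mul_of_neg_right hcase' (by linarith)
    have h2 : N * (p ^ 2 - 1) ^ 2 + 4 * N * p * (p ^ 2 - 1) * (N - p) = 0 := by
      have h3 : N * (p ^ 2 - 1) ^ 2 + 4 * N * p * (p ^ 2 - 1) * (N - p)
          = -(N * (p ^ 2 - 1)) * (3 * p ^ 2 - 4 * N * p + 1) := by ring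
      rw [h3, h3p, mul_zero]
    have : g p = N * (p ^ 2 - 1) ^ 2 + d ^ 2 * (N - p) := by simp [hg_def]
    rw [this]
    linarith
  obtain ⟨M, hM_def⟩ : ∃ M : ℝ, M = Real.sqrt (1 + d ^ 2) := ⟨_, rfl⟩
  have hM0 : 0 ≤ M := hM_def ▸ Real.sqrt_nonneg _
  have hM2 : M ^ 2 = 1 + d ^ 2 := by rw [hM_def]; exact Real.sq_sqrt (by positivity)
  have hM1 : 1 < M := by nlinarith [hM2, hM0]
  have hpM : p < M := by
    have h4Np : (1:ℝ) < 4 * N * p := by nlinarith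
    have hlt : p ^ 2 - 1 < d ^ 2 := by
      nlinarith [mul_pos (show (0:ℝ) < 4 * N * p - 1 by linarith) hp2]
    by_contra h
    push_neg at h
    have hsq : M ^ 2 ≤ p ^ 2 := pow_le_pow_left₀ hM0 h 2
    linarith [hM2 ▸ hsq]
  have hgM : 0 < g M := by
    have hMle : M ≤ 1 + d ^ 2 := by nlinarith
    have h1 : 0 < N * d ^ 2 + N - M := by nlinarith
    have h2 : g M = d ^ 2 * (N * d ^ 2 + N - M) := by
      have : g M = N * (M ^ 2 - 1) ^ 2 + d ^ 2 * (N - M) := by simp [hg_def]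
      rw [this]
      linear_combination (N * (M ^ 2 - 1 + d ^ 2)) * hM2
    rw [h2]
    positivity
  -- roots by IVT
  obtain ⟨a, ha_mem, ha⟩ : ∃ a ∈ Set.Ioo 1 p, g a = 0 := by
    obtain ⟨a, h1, h2⟩ := intermediate_value_Ioo' (le_of_lt hp1) hgc.continuousOn
      (a := 1) (b := p) ⟨hgp, hg1⟩
    exact ⟨a, h1, h2⟩
  obtain ⟨c, hc_mem, hc⟩ : ∃ c ∈ Set.Ioo p M, g c = 0 := by
    obtain ⟨c, h1, h2⟩ := intermediate_value_Ioo (le_of_lt hpM) hgc.continuousOn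
      (a := p) (b := M) ⟨hgp, hgM⟩
    exact ⟨c, h1, h2⟩
  have ha1 : 1 < a := ha_mem.1
  have hac : a < c := lt_trans ha_mem.2 hc_mem.1
  have hcM : c < M := hc_mem.2
  have haM : a < M := lt_trans hac hcM
  have hc1 : 1 < c := lt_trans ha1 hac
  clear hcase hcase' hsqrt_eq hs2 hs0 hsN h3p hpN hp1 hp2 hg1 hgp hgM hgc ha_mem hc_mem
  clear hpM hp_def hs_def p s
  -- the convexity identity
  have hid : ∀ x y z : ℝ, (z - y) * g x + (y - x) * g z - (z - x) * g y
      = (y - x) * (z - y) * (z - x) *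
        (N * (x ^ 2 + y ^ 2 + z ^ 2 + x * y + x * z + y * z - 2)) := by
    intro x y z
    simp only [hg_def]
    ring
  have hQ : ∀ x y z : ℝ, 1 < x → 1 < y → 1 < z →
      0 < N * (x ^ 2 + y ^ 2 + z ^ 2 + x * y + x * z + y * z - 2) := by
    intro x y z hx hy hz
    have h1 : 0 < x * y := by nlinarith
    have h2 : 0 < x * z := by nlinarith
    have h3 : 0 < y * z := by nlinarith
    have hx2 : 1 < x ^ 2 := by nlinarith
    have hy2 : 1 < y ^ 2 := by nlinarith
    have hz2 : 1 < z ^ 2 := by nlinarith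
    have : 0 < x ^ 2 + y ^ 2 + z ^ 2 + x * y + x * z + y * z - 2 := by linarith
    exact mul_pos hN0 this
  -- sign of g
  have hneg : ∀ z : ℝ, a < z → z < c → g z < 0 := by
    intro z h1 h2
    have hidz := hid a z c
    rw [ha, hc] at hidz
    have hQ' := hQ a z c ha1 (lt_trans ha1 h1) hc1
    nlinarith [mul_pos (mul_pos (sub_pos.2 h1) (sub_pos.2 h2)) (sub_pos.2 hac)]
  have hposL : ∀ z : ℝ, 1 < z → z < a → 0 < g z := by
    intro z h1 h2
    have hidz := hid z a c
    rw [ha, hc] at hidz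
    have hQ' := hQ z a c h1 ha1 hc1
    nlinarith [mul_pos (mul_pos (sub_pos.2 h2) (sub_pos.2 hac)) (sub_pos.2 (lt_trans h2 hac))]
  have hposR : ∀ z : ℝ, c < z → 0 < g z := by
    intro z h1
    have hidz := hid a c z
    rw [ha, hc] at hidz
    have hQ' := hQ a c z ha1 hc1 (lt_trans hc1 h1)
    nlinarith [mul_pos (mul_pos (sub_pos.2 hac) (sub_pos.2 h1))
      (sub_pos.2 (lt_trans hac h1))]
  -- relation between phi and g
  have hne : ∀ z : ℝ, 1 < z → z ^ 2 - 1 ≠ 0 := by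
    intro z hz
    have : 0 < z ^ 2 - 1 := by nlinarith
    exact ne_of_gt this
  have hphi_eq : ∀ z : ℝ, 1 < z → phi N d z = g z / (N * d ^ 2 * (z ^ 2 - 1) ^ 2) := by
    intro z hz
    have hz2 : z ^ 2 - 1 ≠ 0 := hne z hz
    have hdne : d ≠ 0 := ne_of_gt hd
    simp only [phi, hg_def]
    field_simp
  have hphi_zero : ∀ z : ℝ, 1 < z → (phi N d z = 0 ↔ g z = 0) := by
    intro z hz
    rw [hphi_eq z hz, div_eq_zero_iff]
    have hz2 : z ^ 2 - 1 ≠ 0 := hne z hz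
    have hden : N * d ^ 2 * (z ^ 2 - 1) ^ 2 ≠ 0 := by
      have : 0 < (z ^ 2 - 1) ^ 2 := by positivity
      positivity
    simp [hden]
  -- derivative
  have hderF : ∀ z : ℝ, 1 < z →
      HasDerivAt (F N d) (2 * (N * z - 1) * g z / (z ^ 2 - 1) ^ 2) z := by
    intro z hz
    simp only [hg_def]
    exact F_deriv N d (hne z hz)
  have hI : I₂ d = Set.Ioo 1 M := by rw [I₂, hM_def]
  rw [hI]
  clear hid hQ hM_def hI
  refine ⟨a, c, hac, ⟨ha1, haM⟩, ⟨hc1, hcM⟩,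
    (hphi_zero a ha1).2 ha, (hphi_zero c hc1).2 hc, ?_, ?_, ?_, ?_, ?_⟩
  · -- uniqueness
    intro z hz hphiz
    have hz1 : 1 < z := hz.1
    have hgz : g z = 0 := (hphi_zero z hz1).1 hphiz
    rcases lt_trichotomy z a with h | h | h
    · exact absurd hgz (ne_of_gt (hposL z hz1 h))
    · exact Or.inl h
    · rcases lt_trichotomy z c with h2 | h2 | h2
      · exact absurd hgz (ne_of_lt (hneg z h h2))
      · exact Or.inr h2
      · exact absurd hgz (ne_of_gt (hposR z h2))
  · -- local max at a
    have h1 : (1 + a) / 2 < a := by linarith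
    have h2 : a < (a + c) / 2 := by linarith
    have h1' : 1 < (1 + a) / 2 := by linarith
    apply helper_max h1 h2 (f' := fun z => 2 * (N * z - 1) * g z / (z ^ 2 - 1) ^ 2)
    · intro x hx
      exact hderF x (by linarith [hx.1])
    · intro x hx
      have hx1 : 1 < x := lt_trans h1' hx.1
      have hgx := hposL x hx1 hx.2
      have hNx : 0 < N * x - 1 := by nlinarith
      exact le_of_lt (div_pos (by nlinarith [mul_pos hNx hgx])
        (pow_pos (by nlinarith : (0:ℝ) < x ^ 2 - 1) 2))
    · intro x hx
      have hx1 : 1 < x := lt_trans ha1 hx.1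
      have hxc : x < c := by
        have : (a + c) / 2 < c := by linarith
        linarith [hx.2]
      have hgx := hneg x hx.1 hxc
      have hNx : 0 < N * x - 1 := by nlinarith
      have hden : 0 < (x ^ 2 - 1) ^ 2 := by
        have : 0 < x ^ 2 - 1 := by nlinarith
        positivity
      apply div_nonpos_of_nonpos_of_nonneg _ (le_of_lt hden)
      nlinarith
  · -- local min at c
    have h1 : (a + c) / 2 < c := by linarith
    have h2 : c < (c + M) / 2 := by linarith
    have h1' : a < (a + c) / 2 := by linarith
    apply helper_min h1 h2 (f' := fun z => 2 * (N * z - 1) * g z / (z ^ 2 - 1) ^ 2)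
    · intro x hx
      have : a < x := lt_of_lt_of_le h1' hx.1
      exact hderF x (by linarith)
    · intro x hx
      have hax : a < x := lt_trans h1' hx.1
      have hx1 : 1 < x := lt_trans ha1 hax
      have hgx := hneg x hax hx.2
      have hNx : 0 < N * x - 1 := by nlinarith
      have hden : 0 < (x ^ 2 - 1) ^ 2 := by
        have : 0 < x ^ 2 - 1 := by nlinarith
        positivity
      apply div_nonpos_of_nonpos_of_nonneg _ (le_of_lt hden)
      nlinarith
    · intro x hx
      have hx1 : 1 < x := lt_trans hc1 hx.1
      have hgx := hposR x hx.1
      have hNx : 0 < N * x - 1 := by nlinarith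
      exact le_of_lt (div_pos (by nlinarith [mul_pos hNx hgx])
        (pow_pos (by nlinarith : (0:ℝ) < x ^ 2 - 1) 2))
  · -- F c < F a
    have hanti : StrictAntiOn (F N d) (Set.Icc a c) := by
      apply strictAntiOn_of_deriv_neg (convex_Icc a c)
      · intro x hx
        exact (hderF x (by linarith [hx.1])).continuousAt.continuousWithinAt
      · intro x hx
        rw [interior_Icc] at hx
        have hx1 : 1 < x := lt_trans ha1 hx.1
        rw [(hderF x hx1).deriv]
        have hgx := hneg x hx.1 hx.2
        have hNx : 0 < N * x - 1 := by nlinarith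
        have hden : 0 < (x ^ 2 - 1) ^ 2 := by
          have : 0 < x ^ 2 - 1 := by nlinarith
          positivity
        apply div_neg_of_neg_of_pos _ hden
        nlinarith
    exact hanti (Set.left_mem_Icc.2 hac.le) (Set.right_mem_Icc.2 hac.le) hac
  · -- F a < 0
    have ha2' : 0 < a ^ 2 - 1 := by nlinarith
    have ha2 : a ^ 2 - 1 < d ^ 2 := by nlinarith [hM2]
    have h1 : 1 - d ^ 2 / (a ^ 2 - 1) < 0 := by
      rw [sub_neg, lt_div_iff₀ ha2']
      linarith
    have h2 : 0 < (1 - N * a) ^ 2 := by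
      have : 1 < N * a := by nlinarith
      nlinarith
    have : F N d a = (1 - N * a) ^ 2 * (1 - d ^ 2 / (a ^ 2 - 1)) := rfl
    rw [this]
    exact mul_neg_of_pos_of_neg h2 h1
end

section
/- Let M > 0. Then the function f(d) = d² − (16M²/(27d²))·((8M²/d² − 6)·√(1 − 3d²/(4M²)) + 8M²/d² − 9), defined for 0 < d < M, has exactly one zero d₀(M) in the open interval (0, M). (Note that f(d) → −∞ as d → 0⁺ and f(d) → M² > 0 as d → M⁻.) -/
/-- `f(d, M) = d² - (16M²/(27d²))((8(M/d)² - 6)√(1 - 3d²/(4M²)) + 8(M/d)² - 9)`. -/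
noncomputable def f (d M : ℝ) : ℝ :=
  d ^ 2 - (16 * M ^ 2 / (27 * d ^ 2)) *
    ((8 * (M / d) ^ 2 - 6) * Real.sqrt (1 - 3 * d ^ 2 / (4 * M ^ 2))
      + 8 * (M / d) ^ 2 - 9)

/-- The auxiliary polynomial-in-`s` form of `f`, with `s = √(1 - 3d²/(4M²))`:
`F(d,M) = 27d⁶ - 64M⁴(s+1)²(2s-1)`. -/
noncomputable def FKH (d M : ℝ) : ℝ :=
  27 * d ^ 6 -
    64 * M ^ 4 * (Real.sqrt (1 - 3 * d ^ 2 / (4 * M ^ 2)) + 1) ^ 2 *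
      (2 * Real.sqrt (1 - 3 * d ^ 2 / (4 * M ^ 2)) - 1)

lemma fKH_key (d M s : ℝ) (hd : d ≠ 0) (hM : M ≠ 0)
    (hu : 0 ≤ 1 - 3 * d ^ 2 / (4 * M ^ 2))
    (hseq : Real.sqrt (1 - 3 * d ^ 2 / (4 * M ^ 2)) = s) :
    f d M * (27 * d ^ 4) = 27 * d ^ 6 - 64 * M ^ 4 * (s + 1) ^ 2 * (2 * s - 1) := by
  have hs : s ^ 2 = 1 - 3 * d ^ 2 / (4 * M ^ 2) := by rw [← hseq]; exact Real.sq_sqrt hu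
  have hs3 : 3 * d ^ 2 = 4 * M ^ 2 * (1 - s ^ 2) := by
    field_simp at hs; linarith
  unfold f
  rw [hseq]
  field_simp
  linear_combination (32 * M ^ 2 * s + 48 * M ^ 2) * hs3

lemma FKH_mono (M : ℝ) (hM : 0 < M) : StrictMonoOn (fun d => FKH d M) (Set.Icc 0 M) := by
  intro a ha b hb hab
  obtain ⟨ha0, haM⟩ := ha
  obtain ⟨hb0, hbM⟩ := hb
  set sa := Real.sqrt (1 - 3 * a ^ 2 / (4 * M ^ 2)) with hsa
  set sb := Real.sqrt (1 - 3 * b ^ 2 / (4 * M ^ 2)) with hsb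
  have hM2 : (0:ℝ) < M ^ 2 := by positivity
  have hub : (1:ℝ)/4 ≤ 1 - 3 * b ^ 2 / (4 * M ^ 2) := by
    have h34 : 3 * b ^ 2 / (4 * M ^ 2) ≤ 3/4 := by
      rw [div_le_div_iff₀ (by positivity) (by norm_num)]
      nlinarith
    linarith
  have hua : 1 - 3 * a ^ 2 / (4 * M ^ 2) ≤ 1 := by
    have : 0 ≤ 3 * a ^ 2 / (4 * M ^ 2) := by positivity
    linarith
  have hlt : sb < sa := by
    apply Real.sqrt_lt_sqrt (by linarith)
    have : a ^ 2 < b ^ 2 := by nlinarith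
    rw [sub_lt_sub_iff_left, div_lt_div_iff₀ (by positivity) (by positivity)]
    nlinarith
  have hsb2 : (1:ℝ)/2 ≤ sb := by
    have := Real.sqrt_le_sqrt hub
    rwa [show ((1:ℝ)/4) = (1/2)^2 by norm_num, Real.sqrt_sq (by norm_num)] at this
  have hsa1 : sa ≤ 1 := by
    rw [show (1:ℝ) = Real.sqrt 1 by rw [Real.sqrt_one]]
    exact Real.sqrt_le_sqrt hua
  have hpow : a ^ 6 ≤ b ^ 6 := by
    apply pow_le_pow_left₀ ha0 (le_of_lt hab)
  have hG : (sb + 1) ^ 2 * (2 * sb - 1) < (sa + 1) ^ 2 * (2 * sa - 1) := by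
    nlinarith [mul_pos (sub_pos.mpr hlt) (mul_pos (show (0:ℝ) < sb by linarith)
      (show (0:ℝ) < sa by linarith)), sq_nonneg (sa - sb), sq_nonneg (sa + sb)]
  have hM4 : (0:ℝ) < 64 * M ^ 4 := by positivity
  have := mul_lt_mul_of_pos_left hG hM4
  simp only [FKH]
  nlinarith [this]

lemma FKH_cont (M : ℝ) : Continuous fun d => FKH d M := by
  unfold FKH
  continuity

/-- For each `M > 0`, the function `d ↦ f(d, M)` has exactly one zero `d₀(M)` in the
open interval `(0, M)`. -/
theorem stmt_17 (M : ℝ) (hM : 0 < M) :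
    ∃! d₀ : ℝ, d₀ ∈ Set.Ioo 0 M ∧ f d₀ M = 0 := by
  have hM2 : (0:ℝ) < M ^ 2 := by positivity
  -- endpoint values
  have hF0 : FKH 0 M = -256 * M ^ 4 := by
    unfold FKH
    norm_num
    ring
  have hFM : FKH M M = 27 * M ^ 6 := by
    unfold FKH
    have h1 : 1 - 3 * M ^ 2 / (4 * M ^ 2) = (1/2 : ℝ)^2 := by
      field_simp; ring
    rw [h1, Real.sqrt_sq (by norm_num)]
    ring
  have hFMpos : 0 < FKH M M := by rw [hFM]; positivity
  have hF0neg : FKH 0 M < 0 := by rw [hF0]; nlinarith [pow_pos hM 4]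
  -- existence of root of FKH
  have hsub := intermediate_value_Ioo (le_of_lt hM) ((FKH_cont M).continuousOn)
  have h0mem : (0:ℝ) ∈ Set.Ioo (FKH 0 M) (FKH M M) := ⟨hF0neg, hFMpos⟩
  obtain ⟨c, hc, hFc⟩ := hsub h0mem
  change FKH c M = 0 at hFc
  -- equivalence between f = 0 and FKH = 0 on (0, M)
  have equiv : ∀ d ∈ Set.Ioo (0:ℝ) M, (f d M = 0 ↔ FKH d M = 0) := by
    intro d hd
    have hd0 : (0:ℝ) < d := hd.1
    have hdM : d < M := hd.2
    have hu : 0 ≤ 1 - 3 * d ^ 2 / (4 * M ^ 2) := by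
      rw [sub_nonneg, div_le_one (by positivity)]
      nlinarith
    have hkey := fKH_key d M (Real.sqrt (1 - 3 * d ^ 2 / (4 * M ^ 2))) (ne_of_gt hd0)
      (ne_of_gt hM) hu rfl
    have hFd : FKH d M = f d M * (27 * d ^ 4) := by rw [hkey]; rfl
    constructor
    · intro h; rw [hFd, h]; ring
    · intro h
      rw [hFd] at h
      have h27 : (27:ℝ) * d ^ 4 ≠ 0 := by positivity
      exact (mul_eq_zero.mp h).resolve_right h27
  refine ⟨c, ⟨hc, (equiv c hc).mpr hFc⟩, ?_⟩
  intro y ⟨hy, hfy⟩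
  have hFy : FKH y M = 0 := (equiv y hy).mp hfy
  have hmono := FKH_mono M hM
  have hyI : y ∈ Set.Icc 0 M := ⟨le_of_lt hy.1, le_of_lt hy.2⟩
  have hcI : c ∈ Set.Icc 0 M := ⟨le_of_lt hc.1, le_of_lt hc.2⟩
  exact hmono.injOn hyI hcI (by rw [hFy, hFc])
end

section
/- Let a > 0, b ≥ 0, k be real, A > 0 and u₂₀ be real. Then every complex root c of the quadratic equation (1 + A)·a² − ((1 + A)·b²·k² + 1)·(u₂₀ − c)² = 0 is real; explicitly, the two roots are c = u₂₀ ± a·√((1 + A)/((1 + A)·b²·k² + 1)). (Hence the flow of two superposed layers with equal unperturbed velocities u₁₀ = u₂₀ is linearly stable.) -/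
/-- For equal unperturbed velocities, every complex root `c` of
`(1 + A)a² - ((1 + A)b²k² + 1)(u₂₀ - c)² = 0` is real; explicitly
`c = u₂₀ ± a √((1 + A)/((1 + A)b²k² + 1))`. Hence the flow is linearly stable. -/
theorem stmt_19 (a b k A u₂₀ : ℝ) (ha : 0 < a) (hb : 0 ≤ b) (hA : 0 < A) :
    ∀ c : ℂ,
      ((1 : ℂ) + (A : ℂ)) * (a : ℂ) ^ 2
        - (((1 : ℂ) + (A : ℂ)) * (b : ℂ) ^ 2 * (k : ℂ) ^ 2 + 1) * ((u₂₀ : ℂ) - c) ^ 2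
        = 0 →
      c.im = 0 ∧
      (c = (u₂₀ : ℂ)
            + (a : ℂ) * (Real.sqrt ((1 + A) / ((1 + A) * b ^ 2 * k ^ 2 + 1)) : ℂ) ∨
       c = (u₂₀ : ℂ)
            - (a : ℂ) * (Real.sqrt ((1 + A) / ((1 + A) * b ^ 2 * k ^ 2 + 1)) : ℂ)) := by
  intro c hc
  set D : ℝ := (1 + A) * b ^ 2 * k ^ 2 + 1 with hD
  have hDpos : 0 < D := by positivity
  set s : ℝ := Real.sqrt ((1 + A) / D) with hs
  have hs2 : s ^ 2 = (1 + A) / D := Real.sq_sqrt (by positivity)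
  -- key algebraic identity: D * s^2 = 1 + A
  have hkey : D * s ^ 2 = 1 + A := by
    rw [hs2]; field_simp
  have hkeyC : (D : ℂ) * (s : ℂ) ^ 2 = 1 + (A : ℂ) := by
    have := congrArg (Complex.ofReal) hkey
    push_cast at this
    exact this
  -- rewrite the equation
  have hfac : ((u₂₀ : ℂ) - c - (a : ℂ) * s) * ((u₂₀ : ℂ) - c + (a : ℂ) * s) = 0 := by
    have hDne : (D : ℂ) ≠ 0 := by
      exact_mod_cast hDpos.ne'
    have h1 : (D : ℂ) * (((u₂₀ : ℂ) - c - (a : ℂ) * s) * ((u₂₀ : ℂ) - c + (a : ℂ) * s)) = 0 := by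
      have : (D : ℂ) * (((u₂₀ : ℂ) - c - (a : ℂ) * s) * ((u₂₀ : ℂ) - c + (a : ℂ) * s))
          = (D : ℂ) * ((u₂₀ : ℂ) - c) ^ 2 - ((D : ℂ) * (s : ℂ) ^ 2) * (a : ℂ) ^ 2 := by ring
      rw [this, hkeyC]
      have hc' : ((1 : ℂ) + (A : ℂ)) * (a : ℂ) ^ 2
          - (D : ℂ) * ((u₂₀ : ℂ) - c) ^ 2 = 0 := by
        have := hc
        push_cast [hD] at this ⊢
        linear_combination this
      linear_combination -hc'
    exact (mul_eq_zero.mp h1).resolve_left hDne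
  rcases mul_eq_zero.mp hfac with h | h
  · have hcval : c = (u₂₀ : ℂ) - (a : ℂ) * s := by linear_combination -h
    refine ⟨?_, Or.inr hcval⟩
    rw [hcval]
    simp [Complex.sub_im]
  · have hcval : c = (u₂₀ : ℂ) + (a : ℂ) * s := by linear_combination -h
    refine ⟨?_, Or.inl hcval⟩
    rw [hcval]
    simp [Complex.add_im]
end
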